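/- arXiv:2409.04589 — 8 statements merged into one kernel-verified Lean document; each statement's English description precedes it below -/
import Mathlib

section
/- Under the multilayered sample selection model, suppose P(AE) > 0. Then the total effect E[Y_{1,D_1} − Y_{0,D_0} | AE] decomposes as E[Y_{1,D_1} − Y_{0,D_0} | AE] = Σ_{d=1}^{K} Σ_{d'=1}^{K} LCDE(d | (d',d)) · P(T=(d',d) | AE) + Σ_{d=1}^{K} Σ_{d'=1, d'≠d}^{K} LCIE(0, d, d' | (d',d)) · P(T=(d',d) | AE), where any summand whose response-type probability P(T=(d',d)) is zero is interpreted as zero; equivalently, the first sum equals E[Y_{1,D_1} − Y_{0,D_1} | AE] and the second sum equals E[Y_{0,D_1} − Y_{0,D_0} | AE]. -/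
open MeasureTheory ProbabilityTheory

/-- `Y_{z,D_{z'}}(ω) = Σ_{d=1}^K Y_{z,d}(ω) · 1{D_{z'}(ω) = d}`. -/
noncomputable def YzD {Ω : Type*} (K : ℕ) (Y : ℕ → ℕ → Ω → ℝ) (z : ℕ) (Dz' : Ω → ℕ)
    (ω : Ω) : ℝ :=
  ∑ d ∈ Finset.Icc 1 K, Y z d ω * (if Dz' ω = d then 1 else 0)

section Aux

variable {Ω : Type*} [MeasurableSpace Ω]

lemma cond_integral_mul_cond_toReal (P : Measure Ω) [IsFiniteMeasure P]
    {s t : Set Ω} (hs : MeasurableSet s) (ht : MeasurableSet t) (hst : s ⊆ t)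
    (g : Ω → ℝ) :
    (∫ ω, g ω ∂(P[|s])) * ((P[|t]) s).toReal
      = (∫ ω in s, g ω ∂P) / (P t).toReal := by
  have hts : t ∩ s = s := Set.inter_eq_self_of_subset_right hst
  rw [ProbabilityTheory.cond_apply ht P s, hts]
  by_cases h0 : P s = 0
  · rw [Measure.restrict_eq_zero.mpr h0, integral_zero_measure]
    simp [h0]
  · have hfin : P s ≠ ⊤ := measure_ne_top P s
    rw [ProbabilityTheory.cond, integral_smul_measure, ENNReal.toReal_inv,
      ENNReal.toReal_mul, ENNReal.toReal_inv]
    have hs0 : (P s).toReal ≠ 0 := ENNReal.toReal_ne_zero.mpr ⟨h0, hfin⟩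
    field_simp
    rw [smul_eq_mul, ← mul_assoc, mul_one_div_cancel hs0, one_mul]

lemma integrable_cond {P : Measure Ω} {s : Set Ω} {f : Ω → ℝ}
    (hf : Integrable f P) (hs : P s ≠ 0) : Integrable f (P[|s]) := by
  rw [ProbabilityTheory.cond]
  exact (hf.restrict).smul_measure (ENNReal.inv_ne_top.mpr hs)

end Aux

/-- decomposition of the total effect on the always-employed into
the weighted LCDE part and the weighted LCIE part. Summands with
`P(T = (d',d)) = 0` are automatically zero since the conditional measure is then
the zero measure. -/
theorem decomposition_of_total_effect
    {Ω : Type*} [MeasurableSpace Ω] (P : Measure Ω) [IsProbabilityMeasure P]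
    (K : ℕ) (hK : 1 ≤ K)
    (Z D0 D1 : Ω → ℕ)
    (hZm : Measurable Z) (hD0m : Measurable D0) (hD1m : Measurable D1)
    (hZ01 : ∀ ω, Z ω ≤ 1) (hD0K : ∀ ω, D0 ω ≤ K) (hD1K : ∀ ω, D1 ω ≤ K)
    (hZpos : 0 < P {ω | Z ω = 1}) (hZlt : P {ω | Z ω = 1} < 1)
    (Y : ℕ → ℕ → Ω → ℝ)
    (hYint : ∀ z ≤ 1, ∀ d, 1 ≤ d → d ≤ K → Integrable (Y z d) P)
    (hAE : 0 < P {ω | 0 < D0 ω ∧ 0 < D1 ω}) :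
    (∫ ω, (YzD K Y 1 D1 ω - YzD K Y 0 D0 ω) ∂(P[|{ω | 0 < D0 ω ∧ 0 < D1 ω}])
      = (∑ d ∈ Finset.Icc 1 K, ∑ d' ∈ Finset.Icc 1 K,
          (∫ ω, (Y 1 d ω - Y 0 d ω) ∂(P[|{ω | D0 ω = d' ∧ D1 ω = d}]))
            * ((P[|{ω | 0 < D0 ω ∧ 0 < D1 ω}]) {ω | D0 ω = d' ∧ D1 ω = d}).toReal)
        + (∑ d ∈ Finset.Icc 1 K, ∑ d' ∈ (Finset.Icc 1 K).erase d,
          (∫ ω, (Y 0 d ω - Y 0 d' ω) ∂(P[|{ω | D0 ω = d' ∧ D1 ω = d}]))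
            * ((P[|{ω | 0 < D0 ω ∧ 0 < D1 ω}]) {ω | D0 ω = d' ∧ D1 ω = d}).toReal))
    ∧ ((∑ d ∈ Finset.Icc 1 K, ∑ d' ∈ Finset.Icc 1 K,
          (∫ ω, (Y 1 d ω - Y 0 d ω) ∂(P[|{ω | D0 ω = d' ∧ D1 ω = d}]))
            * ((P[|{ω | 0 < D0 ω ∧ 0 < D1 ω}]) {ω | D0 ω = d' ∧ D1 ω = d}).toReal)
        = ∫ ω, (YzD K Y 1 D1 ω - YzD K Y 0 D1 ω) ∂(P[|{ω | 0 < D0 ω ∧ 0 < D1 ω}]))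
    ∧ ((∑ d ∈ Finset.Icc 1 K, ∑ d' ∈ (Finset.Icc 1 K).erase d,
          (∫ ω, (Y 0 d ω - Y 0 d' ω) ∂(P[|{ω | D0 ω = d' ∧ D1 ω = d}]))
            * ((P[|{ω | 0 < D0 ω ∧ 0 < D1 ω}]) {ω | D0 ω = d' ∧ D1 ω = d}).toReal)
        = ∫ ω, (YzD K Y 0 D1 ω - YzD K Y 0 D0 ω) ∂(P[|{ω | 0 < D0 ω ∧ 0 < D1 ω}])) := by
  set AE : Set Ω := {ω | 0 < D0 ω ∧ 0 < D1 ω} with hAEdef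
  set S : ℕ → ℕ → Set Ω := fun d d' => {ω | D0 ω = d' ∧ D1 ω = d} with hSdef
  have hAEm : MeasurableSet AE :=
    (hD0m measurableSet_Ioi).inter (hD1m measurableSet_Ioi)
  have hSm : ∀ d d', MeasurableSet (S d d') := fun d d' =>
    (hD0m (measurableSet_singleton d')).inter (hD1m (measurableSet_singleton d))
  have hSsub : ∀ d d', 1 ≤ d → 1 ≤ d' → S d d' ⊆ AE := by
    rintro d d' hd hd' ω ⟨h0, h1⟩
    exact ⟨h0 ▸ hd', h1 ▸ hd⟩
  have hAEne : P AE ≠ 0 := hAE.ne'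
  -- the finset of pairs (d, d')
  set Pr : Finset (ℕ × ℕ) := (Finset.Icc 1 K) ×ˢ (Finset.Icc 1 K) with hPrdef
  have hUnion : (⋃ p ∈ Pr, S p.1 p.2) = AE := by
    ext ω
    simp only [Set.mem_iUnion, Finset.mem_product, Finset.mem_Icc, hSdef, hAEdef,
      Set.mem_setOf_eq, hPrdef, exists_prop]
    constructor
    · rintro ⟨p, ⟨⟨h1, _⟩, ⟨h1', _⟩⟩, h0, hh1⟩
      exact ⟨h0 ▸ h1', hh1 ▸ h1⟩
    · rintro ⟨h0, h1⟩
      exact ⟨(D1 ω, D0 ω), ⟨⟨h1, hD1K ω⟩, ⟨h0, hD0K ω⟩⟩, rfl, rfl⟩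
  have hDisj : Set.Pairwise (↑Pr) (Function.onFun Disjoint fun p : ℕ × ℕ => S p.1 p.2) := by
    rintro p _ q _ hpq
    rw [Function.onFun, Set.disjoint_left]
    rintro ω ⟨h0, h1⟩ ⟨h0', h1'⟩
    exact hpq (Prod.ext (h1 ▸ h1') (h0 ▸ h0'))
  -- integrability
  have hYzDint : ∀ z, z ≤ 1 → ∀ Dz' : Ω → ℕ, Measurable Dz' →
      Integrable (YzD K Y z Dz') P := by
    intro z hz Dz' hDm
    apply integrable_finset_sum
    intro d hd
    rw [Finset.mem_Icc] at hd
    have heq : (fun ω => Y z d ω * (if Dz' ω = d then (1:ℝ) else 0))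
        = Set.indicator {ω | Dz' ω = d} (Y z d) := by
      funext ω
      by_cases h : Dz' ω = d <;> simp [Set.indicator_apply, h]
    rw [heq]
    exact (hYint z hz d hd.1 hd.2).indicator (hDm (measurableSet_singleton d))
  -- YzD evaluates to Y z d on sets where Dz' = d
  have hYeval : ∀ z (Dz' : Ω → ℕ) d, 1 ≤ d → d ≤ K → ∀ ω, Dz' ω = d →
      YzD K Y z Dz' ω = Y z d ω := by
    intro z Dz' d hd1 hdK ω hω
    rw [YzD, Finset.sum_eq_single d]
    · simp [hω]
    · intro e _ hne
      simp [hω, hne.symm, Ne.symm]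
    · intro hd
      exact absurd (Finset.mem_Icc.mpr ⟨hd1, hdK⟩) hd
  -- main decomposition lemma: for g integrable, with per-set representatives h d d'
  have main : ∀ (g : Ω → ℝ), Integrable g P →
      ∀ (h : ℕ → ℕ → Ω → ℝ),
      (∀ d d', d ∈ Finset.Icc 1 K → d' ∈ Finset.Icc 1 K →
        Set.EqOn (h d d') g (S d d')) →
      (∑ d ∈ Finset.Icc 1 K, ∑ d' ∈ Finset.Icc 1 K,
        (∫ ω, h d d' ω ∂(P[|S d d'])) * ((P[|AE]) (S d d')).toReal)
      = ∫ ω, g ω ∂(P[|AE]) := by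
    intro g hg h hh
    have step1 : ∀ d d', d ∈ Finset.Icc 1 K → d' ∈ Finset.Icc 1 K →
        (∫ ω, h d d' ω ∂(P[|S d d'])) * ((P[|AE]) (S d d')).toReal
          = (∫ ω in S d d', g ω ∂P) / (P AE).toReal := by
      intro d d' hd hd'
      rw [Finset.mem_Icc] at hd hd'
      rw [cond_integral_mul_cond_toReal P (hSm d d') hAEm (hSsub d d' hd.1 hd'.1)]
      congr 1
      exact setIntegral_congr_fun (hSm d d') (hh d d' (Finset.mem_Icc.mpr hd) (Finset.mem_Icc.mpr hd'))
    calc (∑ d ∈ Finset.Icc 1 K, ∑ d' ∈ Finset.Icc 1 K,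
        (∫ ω, h d d' ω ∂(P[|S d d'])) * ((P[|AE]) (S d d')).toReal)
        = ∑ d ∈ Finset.Icc 1 K, ∑ d' ∈ Finset.Icc 1 K,
            (∫ ω in S d d', g ω ∂P) / (P AE).toReal :=
          Finset.sum_congr rfl fun d hd => Finset.sum_congr rfl fun d' hd' => step1 d d' hd hd'
      _ = (∑ p ∈ Pr, ∫ ω in S p.1 p.2, g ω ∂P) / (P AE).toReal := by
          rw [Finset.sum_div, hPrdef, Finset.sum_product]
      _ = (∫ ω in ⋃ p ∈ Pr, S p.1 p.2, g ω ∂P) / (P AE).toReal := by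
          rw [integral_biUnion_finset Pr (fun p _ => hSm p.1 p.2) hDisj
            (fun p _ => hg.integrableOn)]
      _ = (∫ ω in AE, g ω ∂P) / (P AE).toReal := by rw [hUnion]
      _ = ∫ ω, g ω ∂(P[|AE]) := by
          rw [ProbabilityTheory.cond, integral_smul_measure, ENNReal.toReal_inv,
            smul_eq_mul, div_eq_inv_mul]
  -- integrabilities of the three YzD functions
  have hA : Integrable (YzD K Y 1 D1) P := hYzDint 1 le_rfl D1 hD1m
  have hB : Integrable (YzD K Y 0 D0) P := hYzDint 0 (by norm_num) D0 hD0m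
  have hC : Integrable (YzD K Y 0 D1) P := hYzDint 0 (by norm_num) D1 hD1m
  -- claim 2
  have claim2 : (∑ d ∈ Finset.Icc 1 K, ∑ d' ∈ Finset.Icc 1 K,
          (∫ ω, (Y 1 d ω - Y 0 d ω) ∂(P[|S d d']))
            * ((P[|AE]) (S d d')).toReal)
        = ∫ ω, (YzD K Y 1 D1 ω - YzD K Y 0 D1 ω) ∂(P[|AE]) := by
    apply main _ (hA.sub hC)
    intro d d' hd hd' ω hω
    rw [Finset.mem_Icc] at hd
    obtain ⟨h0, h1⟩ := hω
    simp only [Pi.sub_apply]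
    rw [hYeval 1 D1 d hd.1 hd.2 ω h1, hYeval 0 D1 d hd.1 hd.2 ω h1]
  -- claim 3
  have claim3 : (∑ d ∈ Finset.Icc 1 K, ∑ d' ∈ (Finset.Icc 1 K).erase d,
          (∫ ω, (Y 0 d ω - Y 0 d' ω) ∂(P[|S d d']))
            * ((P[|AE]) (S d d')).toReal)
        = ∫ ω, (YzD K Y 0 D1 ω - YzD K Y 0 D0 ω) ∂(P[|AE]) := by
    have herase : ∀ d ∈ Finset.Icc 1 K,
        (∑ d' ∈ (Finset.Icc 1 K).erase d,
          (∫ ω, (Y 0 d ω - Y 0 d' ω) ∂(P[|S d d']))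
            * ((P[|AE]) (S d d')).toReal)
        = ∑ d' ∈ Finset.Icc 1 K,
          (∫ ω, (Y 0 d ω - Y 0 d' ω) ∂(P[|S d d']))
            * ((P[|AE]) (S d d')).toReal := by
      intro d _
      apply Finset.sum_erase
      simp
    rw [Finset.sum_congr rfl herase]
    apply main _ (hC.sub hB)
    intro d d' hd hd' ω hω
    rw [Finset.mem_Icc] at hd hd'
    obtain ⟨h0, h1⟩ := hω
    simp only [Pi.sub_apply]
    rw [hYeval 0 D1 d hd.1 hd.2 ω h1, hYeval 0 D0 d' hd'.1 hd'.2 ω h0]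
  -- claim 1
  have claim1 : ∫ ω, (YzD K Y 1 D1 ω - YzD K Y 0 D0 ω) ∂(P[|AE])
      = (∫ ω, (YzD K Y 1 D1 ω - YzD K Y 0 D1 ω) ∂(P[|AE]))
        + ∫ ω, (YzD K Y 0 D1 ω - YzD K Y 0 D0 ω) ∂(P[|AE]) := by
    calc ∫ ω, (YzD K Y 1 D1 ω - YzD K Y 0 D0 ω) ∂(P[|AE])
        = ∫ ω, ((YzD K Y 1 D1 ω - YzD K Y 0 D1 ω)
            + (YzD K Y 0 D1 ω - YzD K Y 0 D0 ω)) ∂(P[|AE]) := by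
          congr 1
          funext ω
          ring
      _ = (∫ ω, (YzD K Y 1 D1 ω - YzD K Y 0 D1 ω) ∂(P[|AE]))
            + ∫ ω, (YzD K Y 0 D1 ω - YzD K Y 0 D0 ω) ∂(P[|AE]) :=
          integral_add ((integrable_cond hA hAEne).sub (integrable_cond hC hAEne))
            ((integrable_cond hC hAEne).sub (integrable_cond hB hAEne))
  exact ⟨by rw [claim1, claim2, claim3], claim2, claim3⟩
end

section
/- Under the multilayered sample selection model, suppose P(AE) > 0 and that there is no direct effect, i.e. for each d ∈ {1,…,K} there exists an integrable random variable Y_{•d} with Y_{1,d} = Y_{0,d} = Y_{•d} almost surely. Then E[Y_{1,D_1} − Y_{0,D_0} | AE] = Σ_{d=1}^{K} Σ_{d'=1, d'≠d}^{K} E[Y_{•d} − Y_{•d'} | D_0 = d', D_1 = d] · P(D_0 = d', D_1 = d | AE) = E[Y_{•D_1} − Y_{•D_0} | AE], where Y_{•D_z} := Σ_{d=1}^K Y_{•d}·1{D_z=d} and summands with zero type probability are interpreted as zero. -/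
open MeasureTheory ProbabilityTheory

/-- `Y_{•,D_z}(ω) = Σ_{d=1}^K Y_{•,d}(ω) · 1{D_z(ω) = d}` for a treatment-free
outcome family `Yd : ℕ → Ω → ℝ`. -/
noncomputable def YdotD {Ω : Type*} (K : ℕ) (Yd : ℕ → Ω → ℝ) (Dz : Ω → ℕ) (ω : Ω) : ℝ :=
  ∑ d ∈ Finset.Icc 1 K, Yd d ω * (if Dz ω = d then 1 else 0)

/-- Auxiliary: integral over a subevent `A ⊆ S` of the conditional measure `P[|S]`
factors as conditional expectation given `A` times conditional probability of `A`. -/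
lemma cond_setIntegral_factor {Ω : Type*} [MeasurableSpace Ω] (P : Measure Ω)
    [IsFiniteMeasure P] {S A : Set Ω} (hA : MeasurableSet A) (hAS : A ⊆ S)
    (f : Ω → ℝ) :
    ∫ ω in A, f ω ∂(P[|S]) = (∫ ω, f ω ∂(P[|A])) * ((P[|S]) A).toReal := by
  have hPA_ne_top : P A ≠ ⊤ := measure_ne_top P A
  have hrr : (P.restrict S).restrict A = P.restrict A := by
    rw [Measure.restrict_restrict hA, Set.inter_eq_left.mpr hAS]
  rw [ProbabilityTheory.cond, ProbabilityTheory.cond, Measure.restrict_smul, hrr,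
    integral_smul_measure, integral_smul_measure, Measure.smul_apply,
    Measure.restrict_apply hA, Set.inter_eq_left.mpr hAS, smul_eq_mul, smul_eq_mul,
    smul_eq_mul, ENNReal.toReal_mul]
  by_cases h0 : P A = 0
  · have hres : P.restrict A = 0 := Measure.restrict_eq_zero.mpr h0
    simp [hres, h0]
  · have h1 : ((P A)⁻¹).toReal * (P A).toReal = 1 := by
      rw [ENNReal.toReal_inv]
      exact inv_mul_cancel₀ (by simp [ENNReal.toReal_ne_zero, h0, hPA_ne_top])
    linear_combination (-(∫ ω in A, f ω ∂P) * ((P S)⁻¹).toReal) * h1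

/-- if there is no direct effect (`Y_{1,d} = Y_{0,d} = Y_{•d}`
a.s. for all employment layers `d`), then the total effect on the
always-employed equals the pure sorting sum and equals
`E[Y_{•D_1} − Y_{•D_0} | AE]`.  Summands with `P(D_0 = d', D_1 = d) = 0` are
automatically zero since the conditional measure is then the zero measure. -/
theorem no_direct_effect_decomposition
    {Ω : Type*} [MeasurableSpace Ω] (P : Measure Ω) [IsProbabilityMeasure P]
    (K : ℕ) (hK : 1 ≤ K)
    (Z D0 D1 : Ω → ℕ)
    (hZm : Measurable Z) (hD0m : Measurable D0) (hD1m : Measurable D1)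
    (hZ01 : ∀ ω, Z ω ≤ 1) (hD0K : ∀ ω, D0 ω ≤ K) (hD1K : ∀ ω, D1 ω ≤ K)
    (hZpos : 0 < P {ω | Z ω = 1}) (hZlt : P {ω | Z ω = 1} < 1)
    (Y : ℕ → ℕ → Ω → ℝ)
    (hYint : ∀ z ≤ 1, ∀ d, 1 ≤ d → d ≤ K → Integrable (Y z d) P)
    (Yd : ℕ → Ω → ℝ)
    (hYdint : ∀ d, 1 ≤ d → d ≤ K → Integrable (Yd d) P)
    (hNoDir : ∀ z ≤ 1, ∀ d, 1 ≤ d → d ≤ K → Y z d =ᵐ[P] Yd d)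
    (hAE : 0 < P {ω | 0 < D0 ω ∧ 0 < D1 ω}) :
    (∫ ω, (YzD K Y 1 D1 ω - YzD K Y 0 D0 ω) ∂(P[|{ω | 0 < D0 ω ∧ 0 < D1 ω}])
      = ∑ d ∈ Finset.Icc 1 K, ∑ d' ∈ (Finset.Icc 1 K).erase d,
          (∫ ω, (Yd d ω - Yd d' ω) ∂(P[|{ω | D0 ω = d' ∧ D1 ω = d}]))
            * ((P[|{ω | 0 < D0 ω ∧ 0 < D1 ω}]) {ω | D0 ω = d' ∧ D1 ω = d}).toReal)
    ∧ (∫ ω, (YzD K Y 1 D1 ω - YzD K Y 0 D0 ω) ∂(P[|{ω | 0 < D0 ω ∧ 0 < D1 ω}])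
      = ∫ ω, (YdotD K Yd D1 ω - YdotD K Yd D0 ω) ∂(P[|{ω | 0 < D0 ω ∧ 0 < D1 ω}])) := by
  set S : Set Ω := {ω | 0 < D0 ω ∧ 0 < D1 ω} with hSdef
  have hSm : MeasurableSet S :=
    ((measurableSet_lt measurable_const hD0m).inter (measurableSet_lt measurable_const hD1m))
  set μ := P[|S] with hμdef
  have hac : μ ≪ P := cond_absolutelyContinuous
  -- a.e. equality of all layers simultaneously
  have hae : ∀ᵐ ω ∂P, ∀ d ∈ Finset.Icc 1 K, Y 1 d ω = Yd d ω ∧ Y 0 d ω = Yd d ω := by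
    rw [Filter.eventually_all_finset]
    intro d hd
    obtain ⟨h1, h2⟩ := Finset.mem_Icc.mp hd
    filter_upwards [hNoDir 1 le_rfl d h1 h2, hNoDir 0 (by norm_num) d h1 h2] with ω e1 e0
    exact ⟨e1, e0⟩
  have haeμ : ∀ᵐ ω ∂μ, ∀ d ∈ Finset.Icc 1 K, Y 1 d ω = Yd d ω ∧ Y 0 d ω = Yd d ω :=
    hac.ae_le hae
  -- second conjunct
  have h2 : ∫ ω, (YzD K Y 1 D1 ω - YzD K Y 0 D0 ω) ∂μ
      = ∫ ω, (YdotD K Yd D1 ω - YdotD K Yd D0 ω) ∂μ := by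
    refine integral_congr_ae ?_
    filter_upwards [haeμ] with ω h
    unfold YzD YdotD
    have e1 : ∑ d ∈ Finset.Icc 1 K, Y 1 d ω * (if D1 ω = d then 1 else 0)
        = ∑ d ∈ Finset.Icc 1 K, Yd d ω * (if D1 ω = d then 1 else 0) :=
      Finset.sum_congr rfl fun d hd => by rw [(h d hd).1]
    have e0 : ∑ d ∈ Finset.Icc 1 K, Y 0 d ω * (if D0 ω = d then 1 else 0)
        = ∑ d ∈ Finset.Icc 1 K, Yd d ω * (if D0 ω = d then 1 else 0) :=
      Finset.sum_congr rfl fun d hd => by rw [(h d hd).2]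
    rw [e1, e0]
  refine ⟨?_, h2⟩
  rw [h2]
  -- events
  set A : ℕ → ℕ → Set Ω := fun d d' => {ω | D0 ω = d' ∧ D1 ω = d} with hAdef
  have hAm : ∀ d d', MeasurableSet (A d d') := fun d d' =>
    ((hD0m (measurableSet_singleton d')).inter (hD1m (measurableSet_singleton d)))
  have hASub : ∀ d d', d ∈ Finset.Icc 1 K → d' ∈ (Finset.Icc 1 K).erase d →
      A d d' ⊆ S := by
    intro d d' hd hd' ω hω
    obtain ⟨hω0, hω1⟩ := hω
    constructor
    · rw [hω0]; exact (Finset.mem_Icc.mp (Finset.mem_of_mem_erase hd')).1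
    · rw [hω1]; exact (Finset.mem_Icc.mp hd).1
  -- a.e. membership in S under μ
  have hmemS : ∀ᵐ ω ∂μ, ω ∈ S := by
    rw [hμdef, ProbabilityTheory.cond]
    exact Measure.ae_smul_measure (ae_restrict_mem hSm) _
  -- pointwise identity on S
  have hpt : ∀ ω ∈ S, YdotD K Yd D1 ω - YdotD K Yd D0 ω
      = ∑ d ∈ Finset.Icc 1 K, ∑ d' ∈ (Finset.Icc 1 K).erase d,
          (A d d').indicator (fun ω => Yd d ω - Yd d' ω) ω := by
    intro ω hω
    obtain ⟨h0, h1⟩ := hω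
    have ha : D1 ω ∈ Finset.Icc 1 K := Finset.mem_Icc.mpr ⟨h1, hD1K ω⟩
    have hb : D0 ω ∈ Finset.Icc 1 K := Finset.mem_Icc.mpr ⟨h0, hD0K ω⟩
    have e1 : YdotD K Yd D1 ω = Yd (D1 ω) ω := by
      unfold YdotD
      rw [Finset.sum_eq_single_of_mem (D1 ω) ha]
      · simp
      · intro d hd hne; simp [Ne.symm hne]
    have e0 : YdotD K Yd D0 ω = Yd (D0 ω) ω := by
      unfold YdotD
      rw [Finset.sum_eq_single_of_mem (D0 ω) hb]
      · simp
      · intro d hd hne; simp [Ne.symm hne]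
    rw [e1, e0]
    rw [Finset.sum_eq_single_of_mem (D1 ω) ha]
    · by_cases hne : D0 ω = D1 ω
      · rw [Finset.sum_eq_zero]
        · rw [hne]; ring
        · intro d' hd'
          have : ω ∉ A (D1 ω) d' := by
            intro hmem
            exact (Finset.ne_of_mem_erase hd') (by rw [← hmem.1, hne])
          simp [Set.indicator_of_notMem this]
      · rw [Finset.sum_eq_single_of_mem (D0 ω) (Finset.mem_erase.mpr ⟨hne, hb⟩)]
        · have : ω ∈ A (D1 ω) (D0 ω) := ⟨rfl, rfl⟩
          simp [Set.indicator_of_mem this]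
        · intro d' hd' hne'
          have : ω ∉ A (D1 ω) d' := fun hmem => hne' (hmem.1.symm)
          simp [Set.indicator_of_notMem this]
    · intro d hd hne
      refine Finset.sum_eq_zero fun d' hd' => ?_
      have : ω ∉ A d d' := fun hmem => hne (hmem.2.symm)
      simp [Set.indicator_of_notMem this]
  -- integrability of each summand under μ
  have hPS : P S ≠ 0 := hAE.ne'
  have hint : ∀ d ∈ Finset.Icc 1 K, ∀ d' ∈ (Finset.Icc 1 K).erase d,
      Integrable ((A d d').indicator (fun ω => Yd d ω - Yd d' ω)) μ := by
    intro d hd d' hd'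
    obtain ⟨hd1, hd2⟩ := Finset.mem_Icc.mp hd
    obtain ⟨hd'1, hd'2⟩ := Finset.mem_Icc.mp (Finset.mem_of_mem_erase hd')
    have hP : Integrable ((A d d').indicator (fun ω => Yd d ω - Yd d' ω)) P :=
      ((hYdint d hd1 hd2).sub (hYdint d' hd'1 hd'2)).indicator (hAm d d')
    rw [hμdef, ProbabilityTheory.cond]
    exact (hP.restrict).smul_measure (by simpa using hPS)
  calc ∫ ω, (YdotD K Yd D1 ω - YdotD K Yd D0 ω) ∂μ
      = ∫ ω, (∑ d ∈ Finset.Icc 1 K, ∑ d' ∈ (Finset.Icc 1 K).erase d,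
          (A d d').indicator (fun ω => Yd d ω - Yd d' ω) ω) ∂μ := by
        refine integral_congr_ae ?_
        filter_upwards [hmemS] with ω hω
        exact hpt ω hω
    _ = ∑ d ∈ Finset.Icc 1 K, ∑ d' ∈ (Finset.Icc 1 K).erase d,
          ∫ ω, (A d d').indicator (fun ω => Yd d ω - Yd d' ω) ω ∂μ := by
        rw [integral_finset_sum _ fun d hd =>
          integrable_finset_sum _ fun d' hd' => hint d hd d' hd']
        exact Finset.sum_congr rfl fun d hd =>
          integral_finset_sum _ fun d' hd' => hint d hd d' hd'
    _ = ∑ d ∈ Finset.Icc 1 K, ∑ d' ∈ (Finset.Icc 1 K).erase d,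
          (∫ ω, (Yd d ω - Yd d' ω) ∂(P[|A d d'])) * (μ (A d d')).toReal := by
        refine Finset.sum_congr rfl fun d hd => Finset.sum_congr rfl fun d' hd' => ?_
        rw [integral_indicator (hAm d d'),
          cond_setIntegral_factor P (hAm d d') (hASub d d' hd hd')]
end

section
/- (Lee bounds, binary outcome.) Under the multilayered sample selection model with Assumptions RCT and LM, suppose P(D_0 > 0) > 0 and each Y_{z,d} takes values in {0,1}, and set p := P(D>0 | Z=0) / P(D>0 | Z=1). Then max{0, 1 − (1/p)·P[Y=0 | D>0, Z=1]} − E[Y | D>0, Z=0] ≤ E[Y_{1,D_1} − Y_{0,D_0} | AE] ≤ min{1, (1/p)·P[Y=1 | D>0, Z=1]} − E[Y | D>0, Z=0]. -/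
open MeasureTheory ProbabilityTheory

/-- Realized layer `D = D_1·Z + D_0·(1−Z)` (for `Z` valued in `{0,1}`). -/
def Dreal {Ω : Type*} (Z D0 D1 : Ω → ℕ) (ω : Ω) : ℕ :=
  D1 ω * Z ω + D0 ω * (1 - Z ω)

/-- Realized outcome `Y = Σ_{d=1}^K [Y_{1,d}·Z + Y_{0,d}·(1−Z)]·1{D=d}`. -/
noncomputable def Yreal {Ω : Type*} (K : ℕ) (Z D0 D1 : Ω → ℕ) (Y : ℕ → ℕ → Ω → ℝ)
    (ω : Ω) : ℝ :=
  ∑ d ∈ Finset.Icc 1 K,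
    (Y 1 d ω * (Z ω : ℝ) + Y 0 d ω * (1 - (Z ω : ℝ))) *
      (if Dreal Z D0 D1 ω = d then 1 else 0)

/-- Assumption RCT: the σ-algebra generated by the potential outcomes
`Y_{z,d}` (for `z ∈ {0,1}`, `d ∈ {1,…,K}`) together with `D_0, D_1` is
independent of (the σ-algebra generated by) `Z`. -/
def RCT {Ω : Type*} [MeasurableSpace Ω] (P : Measure Ω) (K : ℕ)
    (Y : ℕ → ℕ → Ω → ℝ) (D0 D1 Z : Ω → ℕ) : Prop :=
  Indep
    ((⨆ z ∈ ({0, 1} : Set ℕ), ⨆ d ∈ Set.Icc 1 K, MeasurableSpace.comap (Y z d) inferInstance)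
      ⊔ MeasurableSpace.comap D0 inferInstance ⊔ MeasurableSpace.comap D1 inferInstance)
    (MeasurableSpace.comap Z inferInstance) P

/-- Assumption LM (Lee's monotonicity): `P(1{D_1>0} ≥ 1{D_0>0}) = 1`. -/
def LM {Ω : Type*} [MeasurableSpace Ω] (P : Measure Ω) (D0 D1 : Ω → ℕ) : Prop :=
  P {ω | (if 0 < D0 ω then (1 : ℝ) else 0) ≤ (if 0 < D1 ω then (1 : ℝ) else 0)} = 1

/-! ### Auxiliary definitions and lemmas -/

lemma YzD_eq {Ω : Type*} (K : ℕ) (Y : ℕ → ℕ → Ω → ℝ) (z : ℕ) (Dz' : Ω → ℕ) (ω : Ω) :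
    YzD K Y z Dz' ω = if Dz' ω ∈ Finset.Icc 1 K then Y z (Dz' ω) ω else 0 := by
  unfold YzD
  simp [mul_ite, Finset.sum_ite_eq]

lemma Dreal_one {Ω : Type*} (Z D0 D1 : Ω → ℕ) (ω : Ω) (h : Z ω = 1) :
    Dreal Z D0 D1 ω = D1 ω := by simp [Dreal, h]

lemma Dreal_zero {Ω : Type*} (Z D0 D1 : Ω → ℕ) (ω : Ω) (h : Z ω = 0) :
    Dreal Z D0 D1 ω = D0 ω := by simp [Dreal, h]

lemma Yreal_one {Ω : Type*} (K : ℕ) (Z D0 D1 : Ω → ℕ) (Y : ℕ → ℕ → Ω → ℝ) (ω : Ω)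
    (h : Z ω = 1) : Yreal K Z D0 D1 Y ω = YzD K Y 1 D1 ω := by
  unfold Yreal YzD
  rw [Dreal_one Z D0 D1 ω h]
  simp [h]

lemma Yreal_zero {Ω : Type*} (K : ℕ) (Z D0 D1 : Ω → ℕ) (Y : ℕ → ℕ → Ω → ℝ) (ω : Ω)
    (h : Z ω = 0) : Yreal K Z D0 D1 Y ω = YzD K Y 0 D0 ω := by
  unfold Yreal YzD
  rw [Dreal_zero Z D0 D1 ω h]
  simp [h]

/-- The σ-algebra appearing in the RCT assumption. -/
def mRCT {Ω : Type*} (K : ℕ) (Y : ℕ → ℕ → Ω → ℝ) (D0 D1 : Ω → ℕ) : MeasurableSpace Ω :=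
  ((⨆ z ∈ ({0, 1} : Set ℕ), ⨆ d ∈ Set.Icc 1 K, MeasurableSpace.comap (Y z d) inferInstance)
    ⊔ MeasurableSpace.comap D0 inferInstance ⊔ MeasurableSpace.comap D1 inferInstance)

lemma mRCT_D0 {Ω : Type*} (K : ℕ) (Y : ℕ → ℕ → Ω → ℝ) (D0 D1 : Ω → ℕ) :
    Measurable[mRCT K Y D0 D1] D0 :=
  measurable_iff_comap_le.2 (le_trans le_sup_right le_sup_left)

lemma mRCT_D1 {Ω : Type*} (K : ℕ) (Y : ℕ → ℕ → Ω → ℝ) (D0 D1 : Ω → ℕ) :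
    Measurable[mRCT K Y D0 D1] D1 :=
  measurable_iff_comap_le.2 le_sup_right

lemma mRCT_Y {Ω : Type*} (K : ℕ) (Y : ℕ → ℕ → Ω → ℝ) (D0 D1 : Ω → ℕ)
    (z : ℕ) (hz : z ∈ ({0, 1} : Set ℕ)) (d : ℕ) (hd : d ∈ Set.Icc 1 K) :
    Measurable[mRCT K Y D0 D1] (Y z d) := by
  apply measurable_iff_comap_le.2
  refine le_trans ?_ (le_trans (le_sup_left) (le_sup_left))
  refine le_trans (le_biSup (fun d => MeasurableSpace.comap (Y z d) inferInstance) hd) ?_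
  exact le_biSup (fun z => ⨆ d ∈ Set.Icc 1 K, MeasurableSpace.comap (Y z d) inferInstance) hz

lemma mRCT_YzD {Ω : Type*} (K : ℕ) (Y : ℕ → ℕ → Ω → ℝ) (D0 D1 : Ω → ℕ)
    (z : ℕ) (hz : z ∈ ({0, 1} : Set ℕ)) (Dz' : Ω → ℕ)
    (hDz' : Measurable[mRCT K Y D0 D1] Dz') :
    Measurable[mRCT K Y D0 D1] (YzD K Y z Dz') := by
  apply Finset.measurable_sum
  intro d hd
  rw [Finset.mem_Icc] at hd
  exact (mRCT_Y K Y D0 D1 z hz d ⟨hd.1, hd.2⟩).mul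
    (Measurable.ite (hDz' (measurableSet_singleton d)) measurable_const measurable_const)

/-- Lee bounds, binary outcome. -/
theorem lee_bounds_binary
    {Ω : Type*} [MeasurableSpace Ω] (P : Measure Ω) [IsProbabilityMeasure P]
    (K : ℕ) (hK : 1 ≤ K)
    (Z D0 D1 : Ω → ℕ)
    (hZm : Measurable Z) (hD0m : Measurable D0) (hD1m : Measurable D1)
    (hZ01 : ∀ ω, Z ω ≤ 1) (hD0K : ∀ ω, D0 ω ≤ K) (hD1K : ∀ ω, D1 ω ≤ K)
    (hZpos : 0 < P {ω | Z ω = 1}) (hZlt : P {ω | Z ω = 1} < 1)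
    (Y : ℕ → ℕ → Ω → ℝ)
    (hYm : ∀ z ≤ 1, ∀ d, 1 ≤ d → d ≤ K → Measurable (Y z d))
    (hYint : ∀ z ≤ 1, ∀ d, 1 ≤ d → d ≤ K → Integrable (Y z d) P)
    (hBinary : ∀ z ≤ 1, ∀ d, 1 ≤ d → d ≤ K → ∀ ω, Y z d ω = 0 ∨ Y z d ω = 1)
    (hRCT : RCT P K Y D0 D1 Z) (hLM : LM P D0 D1)
    (hD0pos : 0 < P {ω | 0 < D0 ω}) :
    (max 0 (1 - (((P[|{ω | Z ω = 0}]) {ω | 0 < Dreal Z D0 D1 ω}).toReal /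
          ((P[|{ω | Z ω = 1}]) {ω | 0 < Dreal Z D0 D1 ω}).toReal)⁻¹ *
            ((P[|{ω | 0 < Dreal Z D0 D1 ω ∧ Z ω = 1}]) {ω | Yreal K Z D0 D1 Y ω = 0}).toReal)
        - (∫ ω, Yreal K Z D0 D1 Y ω ∂(P[|{ω | 0 < Dreal Z D0 D1 ω ∧ Z ω = 0}]))
      ≤ ∫ ω, (YzD K Y 1 D1 ω - YzD K Y 0 D0 ω) ∂(P[|{ω | 0 < D0 ω ∧ 0 < D1 ω}]))
    ∧ (∫ ω, (YzD K Y 1 D1 ω - YzD K Y 0 D0 ω) ∂(P[|{ω | 0 < D0 ω ∧ 0 < D1 ω}])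
      ≤ min 1 ((((P[|{ω | Z ω = 0}]) {ω | 0 < Dreal Z D0 D1 ω}).toReal /
          ((P[|{ω | Z ω = 1}]) {ω | 0 < Dreal Z D0 D1 ω}).toReal)⁻¹ *
            ((P[|{ω | 0 < Dreal Z D0 D1 ω ∧ Z ω = 1}]) {ω | Yreal K Z D0 D1 Y ω = 1}).toReal)
        - (∫ ω, Yreal K Z D0 D1 Y ω ∂(P[|{ω | 0 < Dreal Z D0 D1 ω ∧ Z ω = 0}]))) := by
  have h01 : (0 : ℕ) ∈ ({0, 1} : Set ℕ) := by simp
  have h11 : (1 : ℕ) ∈ ({0, 1} : Set ℕ) := by simp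
  set g1 : Ω → ℝ := YzD K Y 1 D1 with hg1def
  set g0 : Ω → ℝ := YzD K Y 0 D0 with hg0def
  set A0 : Set Ω := {ω | 0 < D0 ω} with hA0def
  set A1 : Set Ω := {ω | 0 < D1 ω} with hA1def
  set sZ1 : Set Ω := {ω | Z ω = 1} with hsZ1def
  set sZ0 : Set Ω := {ω | Z ω = 0} with hsZ0def
  -- ambient measurability
  have hg1m : Measurable g1 := by
    apply Finset.measurable_sum
    intro d hd
    rw [Finset.mem_Icc] at hd
    exact (hYm 1 le_rfl d hd.1 hd.2).mul
      (Measurable.ite (hD1m (measurableSet_singleton d)) measurable_const measurable_const)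
  have hg0m : Measurable g0 := by
    apply Finset.measurable_sum
    intro d hd
    rw [Finset.mem_Icc] at hd
    exact (hYm 0 (by norm_num) d hd.1 hd.2).mul
      (Measurable.ite (hD0m (measurableSet_singleton d)) measurable_const measurable_const)
  have hA0m : MeasurableSet A0 := hD0m measurableSet_Ioi
  have hA1m : MeasurableSet A1 := hD1m measurableSet_Ioi
  have hZ1m : MeasurableSet sZ1 := hZm (measurableSet_singleton 1)
  have hZ0m : MeasurableSet sZ0 := hZm (measurableSet_singleton 0)
  have hg1setm : ∀ c : ℝ, MeasurableSet {ω | g1 ω = c} :=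
    fun c => hg1m (measurableSet_singleton c)
  have hg0setm : ∀ c : ℝ, MeasurableSet {ω | g0 ω = c} :=
    fun c => hg0m (measurableSet_singleton c)
  -- m-measurability
  have hA0M : MeasurableSet[mRCT K Y D0 D1] A0 := mRCT_D0 K Y D0 D1 measurableSet_Ioi
  have hA1M : MeasurableSet[mRCT K Y D0 D1] A1 := mRCT_D1 K Y D0 D1 measurableSet_Ioi
  have hg1setM : ∀ c : ℝ, MeasurableSet[mRCT K Y D0 D1] {ω | g1 ω = c} :=
    fun c => mRCT_YzD K Y D0 D1 1 h11 D1 (mRCT_D1 K Y D0 D1) (measurableSet_singleton c)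
  have hg0setM : ∀ c : ℝ, MeasurableSet[mRCT K Y D0 D1] {ω | g0 ω = c} :=
    fun c => mRCT_YzD K Y D0 D1 0 h01 D0 (mRCT_D0 K Y D0 D1) (measurableSet_singleton c)
  have hTZ1 : MeasurableSet[MeasurableSpace.comap Z inferInstance] sZ1 :=
    ⟨{1}, measurableSet_singleton 1, rfl⟩
  have hTZ0 : MeasurableSet[MeasurableSpace.comap Z inferInstance] sZ0 :=
    ⟨{0}, measurableSet_singleton 0, rfl⟩
  -- independence
  have hInd : ∀ S T : Set Ω, MeasurableSet[mRCT K Y D0 D1] S →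
      MeasurableSet[MeasurableSpace.comap Z inferInstance] T → P (S ∩ T) = P S * P T :=
    fun S T hS hT =>
      (Indep.indepSet_of_measurableSet (hRCT : Indep (mRCT K Y D0 D1) _ P)
        hS hT).measure_inter_eq_mul
  -- binary values
  have hg1bin : ∀ ω, g1 ω = 0 ∨ g1 ω = 1 := by
    intro ω
    rw [hg1def, YzD_eq]
    split_ifs with h
    · rw [Finset.mem_Icc] at h
      exact hBinary 1 le_rfl (D1 ω) h.1 h.2 ω
    · exact Or.inl rfl
  have hg0bin : ∀ ω, g0 ω = 0 ∨ g0 ω = 1 := by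
    intro ω
    rw [hg0def, YzD_eq]
    split_ifs with h
    · rw [Finset.mem_Icc] at h
      exact hBinary 0 (by norm_num) (D0 ω) h.1 h.2 ω
    · exact Or.inl rfl
  have hg0sub : {ω | g0 ω = 1} ⊆ A0 := by
    intro ω h
    simp only [Set.mem_setOf_eq] at h
    rw [hA0def]
    simp only [Set.mem_setOf_eq]
    by_contra hc
    have hD0z : D0 ω = 0 := by omega
    rw [hg0def, YzD_eq] at h
    simp [hD0z] at h
  -- LM consequences
  have hnull : P (A0 \ A1) = 0 := by
    have hMmeas : MeasurableSet {ω | (if 0 < D0 ω then (1 : ℝ) else 0) ≤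
        (if 0 < D1 ω then (1 : ℝ) else 0)} := by
      apply measurableSet_le
      · exact Measurable.ite (hD0m measurableSet_Ioi) measurable_const measurable_const
      · exact Measurable.ite (hD1m measurableSet_Ioi) measurable_const measurable_const
    have hcompl : P {ω | (if 0 < D0 ω then (1 : ℝ) else 0) ≤
        (if 0 < D1 ω then (1 : ℝ) else 0)}ᶜ = 0 := by
      rw [measure_compl hMmeas (measure_ne_top _ _), hLM, measure_univ, tsub_self]
    refine measure_mono_null ?_ hcompl
    rintro ω ⟨h0, h1⟩
    simp only [hA0def, hA1def, Set.mem_setOf_eq] at h0 h1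
    simp only [Set.mem_compl_iff, Set.mem_setOf_eq, not_le]
    rw [if_pos h0, if_neg h1]
    norm_num
  have hPAE : P (A0 ∩ A1) = P A0 := by
    rw [← Set.diff_diff_right_self, measure_diff_null hnull]
  -- probabilities of Z events
  have ha0 : P sZ1 ≠ 0 := hZpos.ne'
  have hsZ0compl : sZ0 = sZ1ᶜ := by
    ext ω
    have := hZ01 ω
    simp only [hsZ0def, hsZ1def, Set.mem_compl_iff, Set.mem_setOf_eq]
    omega
  have ha'0 : P sZ0 ≠ 0 := by
    rw [hsZ0compl, measure_compl hZ1m (measure_ne_top _ _), measure_univ]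
    intro h
    rw [tsub_eq_zero_iff_le] at h
    exact absurd (lt_of_lt_of_le hZlt h) (lt_irrefl _)
  have hPA1ne : P A1 ≠ 0 := by
    intro h
    have h2 : P (A0 ∩ A1) = 0 := measure_mono_null Set.inter_subset_right h
    rw [hPAE] at h2
    exact hD0pos.ne' h2
  -- set identities
  have hsetD1 : {ω | 0 < Dreal Z D0 D1 ω ∧ Z ω = 1} = A1 ∩ sZ1 := by
    ext ω
    simp only [Set.mem_setOf_eq, Set.mem_inter_iff, hA1def, hsZ1def]
    constructor
    · rintro ⟨h1, h2⟩; rw [Dreal_one Z D0 D1 ω h2] at h1; exact ⟨h1, h2⟩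
    · rintro ⟨h1, h2⟩; rw [Dreal_one Z D0 D1 ω h2]; exact ⟨h1, h2⟩
  have hsetD0 : {ω | 0 < Dreal Z D0 D1 ω ∧ Z ω = 0} = A0 ∩ sZ0 := by
    ext ω
    simp only [Set.mem_setOf_eq, Set.mem_inter_iff, hA0def, hsZ0def]
    constructor
    · rintro ⟨h1, h2⟩; rw [Dreal_zero Z D0 D1 ω h2] at h1; exact ⟨h1, h2⟩
    · rintro ⟨h1, h2⟩; rw [Dreal_zero Z D0 D1 ω h2]; exact ⟨h1, h2⟩
  have hsetZ0D : sZ0 ∩ {ω | 0 < Dreal Z D0 D1 ω} = A0 ∩ sZ0 := by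
    ext ω
    simp only [Set.mem_inter_iff, Set.mem_setOf_eq, hA0def, hsZ0def]
    constructor
    · rintro ⟨h2, h1⟩; rw [Dreal_zero Z D0 D1 ω h2] at h1; exact ⟨h1, h2⟩
    · rintro ⟨h1, h2⟩; rw [Dreal_zero Z D0 D1 ω h2]; exact ⟨h2, h1⟩
  have hsetZ1D : sZ1 ∩ {ω | 0 < Dreal Z D0 D1 ω} = A1 ∩ sZ1 := by
    ext ω
    simp only [Set.mem_inter_iff, Set.mem_setOf_eq, hA1def, hsZ1def]
    constructor
    · rintro ⟨h2, h1⟩; rw [Dreal_one Z D0 D1 ω h2] at h1; exact ⟨h1, h2⟩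
    · rintro ⟨h1, h2⟩; rw [Dreal_one Z D0 D1 ω h2]; exact ⟨h2, h1⟩
  have hsetY1 : ∀ c : ℝ, (A1 ∩ sZ1) ∩ {ω | Yreal K Z D0 D1 Y ω = c}
      = ({ω | g1 ω = c} ∩ A1) ∩ sZ1 := by
    intro c
    ext ω
    simp only [Set.mem_inter_iff, Set.mem_setOf_eq, hA1def, hsZ1def, hg1def]
    constructor
    · rintro ⟨⟨h1, h2⟩, h3⟩
      rw [Yreal_one K Z D0 D1 Y ω h2] at h3
      exact ⟨⟨h3, h1⟩, h2⟩
    · rintro ⟨⟨h3, h1⟩, h2⟩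
      rw [← Yreal_one K Z D0 D1 Y ω h2] at h3
      exact ⟨⟨h1, h2⟩, h3⟩
  -- the two selection probabilities
  have hc0 : (P[|sZ0]) {ω | 0 < Dreal Z D0 D1 ω} = P A0 := by
    rw [cond_apply hZ0m, hsetZ0D, hInd A0 sZ0 hA0M hTZ0, mul_comm (P A0) (P sZ0), ← mul_assoc,
      ENNReal.inv_mul_cancel ha'0 (measure_ne_top _ _), one_mul]
  have hc1 : (P[|sZ1]) {ω | 0 < Dreal Z D0 D1 ω} = P A1 := by
    rw [cond_apply hZ1m, hsetZ1D, hInd A1 sZ1 hA1M hTZ1, mul_comm (P A1) (P sZ1), ← mul_assoc,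
      ENNReal.inv_mul_cancel ha0 (measure_ne_top _ _), one_mul]
  -- real abbreviations
  have hα0pos : 0 < (P A0).toReal := ENNReal.toReal_pos hD0pos.ne' (measure_ne_top _ _)
  have hα01 : (P A0).toReal ≤ (P A1).toReal := by
    refine (ENNReal.toReal_le_toReal (measure_ne_top _ _) (measure_ne_top _ _)).2 ?_
    rw [← hPAE]
    exact measure_mono Set.inter_subset_right
  have hα1pos : 0 < (P A1).toReal := lt_of_lt_of_le hα0pos hα01
  have har1 : (P sZ1).toReal ≠ 0 := ENNReal.toReal_ne_zero.2 ⟨ha0, measure_ne_top _ _⟩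
  have har0 : (P sZ0).toReal ≠ 0 := ENNReal.toReal_ne_zero.2 ⟨ha'0, measure_ne_top _ _⟩
  -- conditional distribution of the realized outcome in the treated selected arm
  have hc2 : ∀ c : ℝ,
      ((P[|{ω | 0 < Dreal Z D0 D1 ω ∧ Z ω = 1}]) {ω | Yreal K Z D0 D1 Y ω = c}).toReal
        = (P ({ω | g1 ω = c} ∩ A1)).toReal / (P A1).toReal := by
    intro c
    rw [hsetD1, cond_apply (hA1m.inter hZ1m), hsetY1 c,
      hInd _ sZ1 ((hg1setM c).inter hA1M) hTZ1, hInd A1 sZ1 hA1M hTZ1,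
      ENNReal.toReal_mul, ENNReal.toReal_inv, ENNReal.toReal_mul, ENNReal.toReal_mul]
    field_simp
  -- indicator representations
  have hg1ind : g1 = Set.indicator {ω | g1 ω = 1} (1 : Ω → ℝ) := by
    funext ω
    rcases hg1bin ω with h | h <;> simp [Set.indicator_apply, Pi.one_apply, h]
  have hg0ind : g0 = Set.indicator {ω | g0 ω = 1} (1 : Ω → ℝ) := by
    funext ω
    rcases hg0bin ω with h | h <;> simp [Set.indicator_apply, Pi.one_apply, h]
  -- the integral over the untreated selected arm
  have hI0 : ∫ ω, Yreal K Z D0 D1 Y ω ∂(P[|{ω | 0 < Dreal Z D0 D1 ω ∧ Z ω = 0}])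
      = (P {ω | g0 ω = 1}).toReal / (P A0).toReal := by
    rw [hsetD0]
    have hae : ∀ᵐ ω ∂(P[|A0 ∩ sZ0]), Yreal K Z D0 D1 Y ω = g0 ω := by
      rw [ae_iff, cond_apply (hA0m.inter hZ0m)]
      have hempty : (A0 ∩ sZ0) ∩ {ω | ¬Yreal K Z D0 D1 Y ω = g0 ω} = ∅ := by
        ext ω
        simp only [Set.mem_empty_iff_false, iff_false]
        rintro ⟨⟨h1, h2⟩, h3⟩
        exact h3 (Yreal_zero K Z D0 D1 Y ω h2)
      rw [hempty, measure_empty, mul_zero]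
    rw [integral_congr_ae hae]
    nth_rewrite 1 [hg0ind]
    rw [integral_indicator_one (hg0setm 1), measureReal_def, cond_apply (hA0m.inter hZ0m)]
    have hs : (A0 ∩ sZ0) ∩ {ω | g0 ω = 1} = {ω | g0 ω = 1} ∩ sZ0 := by
      ext ω
      constructor
      · rintro ⟨⟨_, h2⟩, h3⟩; exact ⟨h3, h2⟩
      · rintro ⟨h3, h2⟩; exact ⟨⟨hg0sub h3, h2⟩, h3⟩
    rw [hs, hInd _ sZ0 (hg0setM 1) hTZ0, hInd A0 sZ0 hA0M hTZ0,
      ENNReal.toReal_mul, ENNReal.toReal_inv, ENNReal.toReal_mul, ENNReal.toReal_mul]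
    field_simp
  -- the integral over the always-employed
  have hAEset : {ω | 0 < D0 ω ∧ 0 < D1 ω} = A0 ∩ A1 := rfl
  have hPAEne : P (A0 ∩ A1) ≠ 0 := by rw [hPAE]; exact hD0pos.ne'
  have hprobE : IsProbabilityMeasure (P[|A0 ∩ A1]) := cond_isProbabilityMeasure hPAEne
  have hw : P ((A0 ∩ A1) ∩ {ω | g0 ω = 1}) = P {ω | g0 ω = 1} := by
    have hss : {ω | g0 ω = 1} \ (A0 ∩ A1) ⊆ A0 \ A1 := by
      rintro ω ⟨h1, h2⟩
      exact ⟨hg0sub h1, fun hA1 => h2 ⟨hg0sub h1, hA1⟩⟩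
    rw [Set.inter_comm, ← Set.diff_diff_right_self,
      measure_diff_null (measure_mono_null hss hnull)]
  have hIΔ : ∫ ω, (g1 ω - g0 ω) ∂(P[|{ω | 0 < D0 ω ∧ 0 < D1 ω}])
      = (P ((A0 ∩ A1) ∩ {ω | g1 ω = 1})).toReal / (P A0).toReal
        - (P {ω | g0 ω = 1}).toReal / (P A0).toReal := by
    rw [hAEset]
    have hint1 : Integrable g1 (P[|A0 ∩ A1]) := by
      rw [hg1ind]; exact (integrable_const 1).indicator (hg1setm 1)
    have hint2 : Integrable g0 (P[|A0 ∩ A1]) := by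
      rw [hg0ind]; exact (integrable_const 1).indicator (hg0setm 1)
    rw [integral_sub hint1 hint2]
    nth_rewrite 1 [hg1ind]
    nth_rewrite 1 [hg0ind]
    rw [integral_indicator_one (hg1setm 1), integral_indicator_one (hg0setm 1),
      measureReal_def, measureReal_def,
      cond_apply (hA0m.inter hA1m), cond_apply (hA0m.inter hA1m), hw, hPAE,
      ENNReal.toReal_mul, ENNReal.toReal_inv, ENNReal.toReal_mul, ENNReal.toReal_inv,
      inv_mul_eq_div, inv_mul_eq_div]
  -- key inequalities
  have hsum : (P A0).toReal ≤ (P ((A0 ∩ A1) ∩ {ω | g1 ω = 1})).toReal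
      + (P ({ω | g1 ω = 0} ∩ A1)).toReal := by
    have hsub2 : (A0 ∩ A1) ⊆ ((A0 ∩ A1) ∩ {ω | g1 ω = 1}) ∪ ({ω | g1 ω = 0} ∩ A1) := by
      intro ω hω
      rcases hg1bin ω with h | h
      · exact Or.inr ⟨h, hω.2⟩
      · exact Or.inl ⟨hω, h⟩
    have h2a : P (A0 ∩ A1) ≤ P (((A0 ∩ A1) ∩ {ω | g1 ω = 1}) ∪ ({ω | g1 ω = 0} ∩ A1)) :=
      measure_mono hsub2
    have h2 := h2a.trans (measure_union_le _ _)
    rw [hPAE] at h2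
    have h3 := ENNReal.toReal_mono
      (ENNReal.add_ne_top.2 ⟨measure_ne_top _ _, measure_ne_top _ _⟩) h2
    rwa [ENNReal.toReal_add (measure_ne_top _ _) (measure_ne_top _ _)] at h3
  have hsE1 : (P ((A0 ∩ A1) ∩ {ω | g1 ω = 1})).toReal ≤ (P A0).toReal := by
    refine ENNReal.toReal_mono (measure_ne_top _ _) ?_
    rw [← hPAE]
    exact measure_mono Set.inter_subset_left
  have hsEu : (P ((A0 ∩ A1) ∩ {ω | g1 ω = 1})).toReal
      ≤ (P ({ω | g1 ω = 1} ∩ A1)).toReal := by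
    refine ENNReal.toReal_mono (measure_ne_top _ _) (measure_mono ?_)
    rintro ω ⟨⟨_, h2⟩, h3⟩
    exact ⟨h3, h2⟩
  -- assemble
  rw [hc0, hc1, hc2 0, hc2 1, hI0, hIΔ, inv_div]
  have hv : (P A1).toReal / (P A0).toReal * ((P ({ω | g1 ω = 0} ∩ A1)).toReal / (P A1).toReal)
      = (P ({ω | g1 ω = 0} ∩ A1)).toReal / (P A0).toReal := by
    field_simp
  have hu : (P A1).toReal / (P A0).toReal * ((P ({ω | g1 ω = 1} ∩ A1)).toReal / (P A1).toReal)
      = (P ({ω | g1 ω = 1} ∩ A1)).toReal / (P A0).toReal := by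
    field_simp
  rw [hv, hu]
  constructor
  · apply sub_le_sub_right
    apply max_le
    · exact div_nonneg ENNReal.toReal_nonneg hα0pos.le
    · rw [sub_le_iff_le_add, ← add_div, le_div_iff₀ hα0pos, one_mul]
      exact hsum
  · apply sub_le_sub_right
    apply le_min
    · rw [div_le_one hα0pos]
      exact hsE1
    · gcongr
end

section
/- (Empirical content of the model.) Under the multilayered sample selection model with Assumption RCT, for every d ∈ {1,…,K} and every bounded measurable function g : ℝ → ℝ: E[g(Y)·1{D=d} | Z=1] = Σ_{d'=0}^{K} P(T=(d',d)) · E[g(Y_{1,d}) | T=(d',d)] and E[g(Y)·1{D=d} | Z=0] = Σ_{d'=0}^{K} P(T=(d,d')) · E[g(Y_{0,d}) | T=(d,d')], where any summand whose response-type probability is zero is interpreted as zero. -/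
open MeasureTheory ProbabilityTheory

/-- The σ-algebra on the left-hand side of Assumption RCT. -/
def selSigma {Ω : Type*} [MeasurableSpace Ω] (K : ℕ) (Y : ℕ → ℕ → Ω → ℝ)
    (D0 D1 : Ω → ℕ) : MeasurableSpace Ω :=
  (⨆ z ∈ ({0, 1} : Set ℕ), ⨆ d ∈ Set.Icc 1 K, MeasurableSpace.comap (Y z d) inferInstance)
    ⊔ MeasurableSpace.comap D0 inferInstance ⊔ MeasurableSpace.comap D1 inferInstance

/-- `(P A).toReal * ∫ f d(P[|A]) = ∫_A f dP`, including the degenerate case `P A = 0`. -/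
lemma cond_toReal_mul_integral {Ω : Type*} [MeasurableSpace Ω] (P : Measure Ω)
    [IsProbabilityMeasure P] (A : Set Ω) (f : Ω → ℝ) :
    (P A).toReal * ∫ ω, f ω ∂(P[|A]) = ∫ ω in A, f ω ∂P := by
  rcases eq_or_ne (P A) 0 with h0 | h0
  · rw [h0, ENNReal.toReal_zero, zero_mul, Measure.restrict_eq_zero.2 h0,
      integral_zero_measure]
  · rw [ProbabilityTheory.cond, integral_smul_measure, smul_eq_mul, ← mul_assoc,
      ENNReal.toReal_inv, mul_inv_cancel₀, one_mul]
    exact ENNReal.toReal_ne_zero.2 ⟨h0, measure_ne_top P A⟩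

/-- empirical content of the multilayered sample selection model.
Summands with `P(T = t) = 0` are automatically zero since the conditional
measure is then the zero measure. -/
theorem empirical_content
    {Ω : Type*} [MeasurableSpace Ω] (P : Measure Ω) [IsProbabilityMeasure P]
    (K : ℕ) (hK : 1 ≤ K)
    (Z D0 D1 : Ω → ℕ)
    (hZm : Measurable Z) (hD0m : Measurable D0) (hD1m : Measurable D1)
    (hZ01 : ∀ ω, Z ω ≤ 1) (hD0K : ∀ ω, D0 ω ≤ K) (hD1K : ∀ ω, D1 ω ≤ K)
    (hZpos : 0 < P {ω | Z ω = 1}) (hZlt : P {ω | Z ω = 1} < 1)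
    (Y : ℕ → ℕ → Ω → ℝ)
    (hYm : ∀ z ≤ 1, ∀ d, 1 ≤ d → d ≤ K → Measurable (Y z d))
    (hYint : ∀ z ≤ 1, ∀ d, 1 ≤ d → d ≤ K → Integrable (Y z d) P)
    (hRCT : RCT P K Y D0 D1 Z)
    (g : ℝ → ℝ) (hg : Measurable g) (C : ℝ) (hgb : ∀ x, |g x| ≤ C)
    (d : ℕ) (hd1 : 1 ≤ d) (hdK : d ≤ K) :
    (∫ ω, g (Yreal K Z D0 D1 Y ω) * (if Dreal Z D0 D1 ω = d then 1 else 0)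
        ∂(P[|{ω | Z ω = 1}])
      = ∑ d' ∈ Finset.range (K + 1),
          (P {ω | D0 ω = d' ∧ D1 ω = d}).toReal *
            ∫ ω, g (Y 1 d ω) ∂(P[|{ω | D0 ω = d' ∧ D1 ω = d}]))
    ∧ (∫ ω, g (Yreal K Z D0 D1 Y ω) * (if Dreal Z D0 D1 ω = d then 1 else 0)
        ∂(P[|{ω | Z ω = 0}])
      = ∑ d' ∈ Finset.range (K + 1),
          (P {ω | D0 ω = d ∧ D1 ω = d'}).toReal *
            ∫ ω, g (Y 0 d ω) ∂(P[|{ω | D0 ω = d ∧ D1 ω = d'}])) := by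
  have hInd : Indep (selSigma K Y D0 D1) (MeasurableSpace.comap Z inferInstance) P := hRCT
  have hC0 : 0 ≤ C := le_trans (abs_nonneg _) (hgb 0)
  have hD0le : MeasurableSpace.comap D0 inferInstance ≤ selSigma K Y D0 D1 := by
    unfold selSigma; exact le_sup_right.trans le_sup_left
  have hD1le : MeasurableSpace.comap D1 inferInstance ≤ selSigma K Y D0 D1 := by
    unfold selSigma; exact le_sup_right
  have hYle : ∀ z ∈ ({0, 1} : Set ℕ), ∀ e ∈ Set.Icc 1 K,
      MeasurableSpace.comap (Y z e) inferInstance ≤ selSigma K Y D0 D1 := by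
    intro z hz e he
    unfold selSigma
    calc MeasurableSpace.comap (Y z e) inferInstance
        ≤ ⨆ e ∈ Set.Icc 1 K, MeasurableSpace.comap (Y z e) inferInstance :=
          le_biSup (fun e => MeasurableSpace.comap (Y z e) inferInstance) he
      _ ≤ ⨆ z ∈ ({0, 1} : Set ℕ), ⨆ e ∈ Set.Icc 1 K,
            MeasurableSpace.comap (Y z e) inferInstance :=
          le_biSup (fun z => ⨆ e ∈ Set.Icc 1 K,
            MeasurableSpace.comap (Y z e) inferInstance) hz
      _ ≤ _ := le_sup_left.trans le_sup_left
  have hD0MM : Measurable[selSigma K Y D0 D1] D0 := Measurable.of_comap_le hD0le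
  have hD1MM : Measurable[selSigma K Y D0 D1] D1 := Measurable.of_comap_le hD1le
  have hY1MM : Measurable[selSigma K Y D0 D1] (Y 1 d) :=
    Measurable.of_comap_le (hYle 1 (by simp) d ⟨hd1, hdK⟩)
  have hY0MM : Measurable[selSigma K Y D0 D1] (Y 0 d) :=
    Measurable.of_comap_le (hYle 0 (by simp) d ⟨hd1, hdK⟩)
  have hz1 : P {ω | Z ω = 1} ≠ 0 := hZpos.ne'
  have hcompl : {ω | Z ω = 0} = {ω | Z ω = 1}ᶜ := by
    ext ω; have := hZ01 ω
    simp only [Set.mem_setOf_eq, Set.mem_compl_iff]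
    omega
  have hmeas1 : MeasurableSet {ω | Z ω = 1} := hZm (measurableSet_singleton 1)
  have hz0 : P {ω | Z ω = 0} ≠ 0 := by
    rw [hcompl, measure_compl hmeas1 (measure_ne_top _ _), measure_univ]
    intro h
    exact absurd (tsub_eq_zero_iff_le.1 h) (not_le.2 hZlt)
  -- the common computation
  have key : ∀ (z : ℕ) (Yz : Ω → ℝ), Measurable Yz → Measurable[selSigma K Y D0 D1] Yz →
      ∀ (V W : Ω → ℕ), Measurable V → Measurable W →
      Measurable[selSigma K Y D0 D1] V → Measurable[selSigma K Y D0 D1] W →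
      (∀ ω, V ω ≤ K) →
      P {ω | Z ω = z} ≠ 0 →
      (∀ ω, Z ω = z → g (Yreal K Z D0 D1 Y ω) * (if Dreal Z D0 D1 ω = d then 1 else 0)
          = g (Yz ω) * (if W ω = d then 1 else 0)) →
      ∫ ω, g (Yreal K Z D0 D1 Y ω) * (if Dreal Z D0 D1 ω = d then 1 else 0)
          ∂(P[|{ω | Z ω = z}])
        = ∑ d' ∈ Finset.range (K + 1),
            (P {ω | V ω = d' ∧ W ω = d}).toReal *
              ∫ ω, g (Yz ω) ∂(P[|{ω | V ω = d' ∧ W ω = d}]) := by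
    intro z Yz hYzm hYzMM V W hVm hWm hVMM hWMM hVK hz heq
    set s : Set Ω := {ω | Z ω = z} with hs
    have hsm : MeasurableSet s := hZm (measurableSet_singleton z)
    set f : ℕ → Ω → ℝ := fun d' ω => g (Yz ω) * (if V ω = d' ∧ W ω = d then 1 else 0)
      with hfdef
    have hAm : ∀ d', MeasurableSet {ω | V ω = d' ∧ W ω = d} := fun d' =>
      (hVm (measurableSet_singleton d')).inter (hWm (measurableSet_singleton d))
    have hAMM : ∀ d', MeasurableSet[selSigma K Y D0 D1] {ω | V ω = d' ∧ W ω = d} := fun d' =>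
      MeasurableSet.inter (hVMM (measurableSet_singleton d')) (hWMM (measurableSet_singleton d))
    have hfm : ∀ d', Measurable (f d') := fun d' =>
      (hg.comp hYzm).mul (Measurable.ite (hAm d') measurable_const measurable_const)
    have hfMM : ∀ d', Measurable[selSigma K Y D0 D1] (f d') := fun d' =>
      Measurable.mul (hg.comp hYzMM)
        (Measurable.ite (m := selSigma K Y D0 D1) (hAMM d') measurable_const measurable_const)
    have hfb : ∀ d' ω, |f d' ω| ≤ C := by
      intro d' ω
      by_cases h : V ω = d' ∧ W ω = d <;> simp [hfdef, h, abs_mul, hgb, hC0]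
    have hfint : ∀ d', Integrable (f d') P := fun d' =>
      Integrable.mono' (integrable_const C) (hfm d').aestronglyMeasurable
        (Filter.Eventually.of_forall (hfb d'))
    have hsZ : MeasurableSet[MeasurableSpace.comap Z inferInstance] s :=
      ⟨{z}, measurableSet_singleton z, rfl⟩
    have hind : Measurable[MeasurableSpace.comap Z inferInstance]
        (fun ω => if Z ω = z then (1 : ℝ) else 0) :=
      Measurable.ite (m := MeasurableSpace.comap Z inferInstance) hsZ
        measurable_const measurable_const
    have hindm : Measurable (fun ω => if Z ω = z then (1 : ℝ) else 0) :=
      Measurable.ite hsm measurable_const measurable_const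
    have hindint : Integrable (fun ω => if Z ω = z then (1 : ℝ) else 0) P :=
      Integrable.mono' (integrable_const 1) hindm.aestronglyMeasurable
        (Filter.Eventually.of_forall (by intro ω; by_cases h : Z ω = z <;> simp [h]))
    have hindeq : ∫ ω, (if Z ω = z then (1 : ℝ) else 0) ∂P = (P s).toReal := by
      rw [show (fun ω => if Z ω = z then (1 : ℝ) else 0) = s.indicator (fun _ => 1) from by
        ext ω; by_cases h : Z ω = z <;> simp [Set.indicator_apply, hs, h]]
      rw [integral_indicator_const _ hsm, smul_eq_mul, mul_one]
      rfl
    have hfac : ∀ d', ∫ ω in s, f d' ω ∂P = (∫ ω, f d' ω ∂P) * (P s).toReal := by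
      intro d'
      have hIndep : IndepFun (f d') (fun ω => if Z ω = z then (1 : ℝ) else 0) P :=
        indep_of_indep_of_le_left (indep_of_indep_of_le_right hInd hind.comap_le)
          (hfMM d').comap_le
      have hmul : ∫ ω, f d' ω * (if Z ω = z then (1 : ℝ) else 0) ∂P
          = (∫ ω, f d' ω ∂P) * ∫ ω, (if Z ω = z then (1 : ℝ) else 0) ∂P :=
        IndepFun.integral_mul_eq_mul_integral hIndep (hfint d').aestronglyMeasurable
          hindint.aestronglyMeasurable
      rw [← integral_indicator hsm]
      rw [show s.indicator (f d') = fun ω => f d' ω * (if Z ω = z then (1 : ℝ) else 0) from by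
        ext ω; by_cases h : Z ω = z <;> simp [Set.indicator_apply, hs, h]]
      rw [hmul, hindeq]
    have ht : (P s).toReal ≠ 0 :=
      ENNReal.toReal_ne_zero.2 ⟨hz, measure_ne_top P s⟩
    calc ∫ ω, g (Yreal K Z D0 D1 Y ω) * (if Dreal Z D0 D1 ω = d then 1 else 0) ∂(P[|s])
        = ((P s)⁻¹).toReal *
            ∫ ω in s, g (Yreal K Z D0 D1 Y ω) * (if Dreal Z D0 D1 ω = d then 1 else 0) ∂P := by
          rw [ProbabilityTheory.cond, integral_smul_measure, smul_eq_mul]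
      _ = ((P s)⁻¹).toReal * ∫ ω in s, (∑ d' ∈ Finset.range (K + 1), f d' ω) ∂P := by
          congr 1
          refine setIntegral_congr_fun hsm fun ω hω => ?_
          rw [heq ω hω]
          by_cases hW : W ω = d
          · simp only [hfdef, hW, eq_self_iff_true, if_true, and_true, mul_one,
              ← Finset.mul_sum]
            rw [Finset.sum_ite_eq,
              if_pos (Finset.mem_range.2 (Nat.lt_succ_of_le (hVK ω))), mul_one]
          · simp [hfdef, hW]
      _ = ((P s)⁻¹).toReal * ∑ d' ∈ Finset.range (K + 1), ∫ ω in s, f d' ω ∂P := by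
          rw [integral_finset_sum _ fun d' _ => (hfint d').restrict]
      _ = ((P s)⁻¹).toReal *
            ∑ d' ∈ Finset.range (K + 1), (∫ ω, f d' ω ∂P) * (P s).toReal := by
          rw [Finset.sum_congr rfl fun d' _ => hfac d']
      _ = ∑ d' ∈ Finset.range (K + 1), ∫ ω, f d' ω ∂P := by
          rw [← Finset.sum_mul, ENNReal.toReal_inv, mul_comm, mul_assoc,
            mul_inv_cancel₀ ht, mul_one]
      _ = ∑ d' ∈ Finset.range (K + 1),
            (P {ω | V ω = d' ∧ W ω = d}).toReal *
              ∫ ω, g (Yz ω) ∂(P[|{ω | V ω = d' ∧ W ω = d}]) := by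
          refine Finset.sum_congr rfl fun d' _ => ?_
          rw [cond_toReal_mul_integral, ← integral_indicator (hAm d')]
          congr 1
          ext ω
          by_cases h : V ω = d' ∧ W ω = d <;> simp [Set.indicator_apply, hfdef, h]
  constructor
  · refine key 1 (Y 1 d) (hYm 1 le_rfl d hd1 hdK) hY1MM D0 D1 hD0m hD1m hD0MM hD1MM hD0K hz1
      fun ω hω => ?_
    have hD : Dreal Z D0 D1 ω = D1 ω := by simp [Dreal, hω]
    rw [hD]
    by_cases h : D1 ω = d
    · have hY : Yreal K Z D0 D1 Y ω = Y 1 d ω := by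
        unfold Yreal
        rw [Finset.sum_eq_single_of_mem d (Finset.mem_Icc.2 ⟨hd1, hdK⟩)]
        · simp [hD, h, hω]
        · intro e he hne
          simp [hD, h, Ne.symm hne]
      rw [hY]
    · simp [h]
  · refine key 0 (Y 0 d) (hYm 0 (by norm_num) d hd1 hdK) hY0MM D1 D0 hD1m hD0m hD1MM hD0MM
      hD1K hz0 ?_ |>.trans ?_
    · intro ω hω
      have hD : Dreal Z D0 D1 ω = D0 ω := by simp [Dreal, hω]
      rw [hD]
      by_cases h : D0 ω = d
      · have hY : Yreal K Z D0 D1 Y ω = Y 0 d ω := by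
          unfold Yreal
          rw [Finset.sum_eq_single_of_mem d (Finset.mem_Icc.2 ⟨hd1, hdK⟩)]
          · simp [hD, h, hω]
          · intro e he hne
            simp [hD, h, Ne.symm hne]
        rw [hY]
      · simp [h]
    · refine Finset.sum_congr rfl fun d' _ => ?_
      have hAeq : {ω | D1 ω = d' ∧ D0 ω = d} = {ω | D0 ω = d ∧ D1 ω = d'} := by
        ext ω; exact and_comm
      rw [hAeq]
end

section
/- (Horowitz–Manski-type bounds for a mixture component.) Let W, W_0, …, W_K be integrable real random variables and γ_0, …, γ_K ≥ 0 with Σ_{k=0}^{K} γ_k = 1, such that the CDFs satisfy F_W(w) = Σ_{k=0}^{K} γ_k · F_{W_k}(w) for all w ∈ ℝ. Then for every k ∈ {0,…,K} with γ_k > 0: E[F_W^{-1}(U) | U ≤ γ_k] ≤ E[W_k] ≤ E[F_W^{-1}(U) | U ≥ 1 − γ_k]. -/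
open MeasureTheory ProbabilityTheory

/-- CDF of a random variable `W` under a measure `μ`. -/
noncomputable def cdfOf {Ω : Type*} [MeasurableSpace Ω] (μ : MeasureTheory.Measure Ω)
    (W : Ω → ℝ) (w : ℝ) : ℝ :=
  (μ {ω | W ω ≤ w}).toReal

/-- Quantile function `F⁻¹(u) = inf {w : F(w) ≥ u}`. -/
noncomputable def quantileFn (F : ℝ → ℝ) (u : ℝ) : ℝ := sInf {w | u ≤ F w}

/-- Lower truncated mean `E[F⁻¹(U) | U ≤ γ]` for `U` uniform on `[0,1]`,
written as `γ⁻¹ ∫_{(0,γ]} F⁻¹(u) du`. -/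
noncomputable def lowerTrunc (F : ℝ → ℝ) (γ : ℝ) : ℝ :=
  γ⁻¹ * ∫ u in Set.Ioc (0 : ℝ) γ, quantileFn F u

/-- Upper truncated mean `E[F⁻¹(U) | U ≥ 1 − γ]` for `U` uniform on `[0,1]`,
written as `γ⁻¹ ∫_{[1−γ,1]} F⁻¹(u) du`. -/
noncomputable def upperTrunc (F : ℝ → ℝ) (γ : ℝ) : ℝ :=
  γ⁻¹ * ∫ u in Set.Ico (1 - γ) (1 : ℝ), quantileFn F u

section Aux

open Set Filter Topology

variable (μ : Measure ℝ)

lemma aux_bddBelow [IsProbabilityMeasure μ] {u : ℝ} (hu : 0 < u) :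
    BddBelow {w | u ≤ cdf μ w} := by
  obtain ⟨w0, hw0⟩ := ((tendsto_cdf_atBot μ).eventually_lt_const hu).exists
  refine ⟨w0, fun w hw => ?_⟩
  by_contra hlt
  push_neg at hlt
  exact absurd (le_trans hw (monotone_cdf μ hlt.le)) (not_le.2 hw0)

lemma aux_nonempty [IsProbabilityMeasure μ] {u : ℝ} (hu : u < 1) :
    {w | u ≤ cdf μ w}.Nonempty := by
  obtain ⟨w, hw⟩ := ((tendsto_cdf_atTop μ).eventually_const_lt hu).exists
  exact ⟨w, hw.le⟩

lemma aux_le_cdf [IsProbabilityMeasure μ] {u : ℝ} (hu0 : 0 < u) (hu1 : u < 1) :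
    u ≤ cdf μ (quantileFn (cdf μ) u) := by
  set q := quantileFn (cdf μ) u with hq
  have hne := aux_nonempty μ hu1
  have hbdd := aux_bddBelow μ hu0
  have h1 : ∀ w ∈ Ioi q, u ≤ cdf μ w := by
    intro w hw
    obtain ⟨s, hs, hsw⟩ := (csInf_lt_iff hbdd hne).mp hw
    exact le_trans hs (monotone_cdf μ hsw.le)
  have h2 : Tendsto (cdf μ) (𝓝[>] q) (𝓝 (cdf μ q)) :=
    ((cdf μ).right_continuous q).tendsto.mono_left
      (nhdsWithin_mono _ Ioi_subset_Ici_self)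
  exact ge_of_tendsto h2 (eventually_nhdsWithin_of_forall h1)

lemma aux_quantile_le_iff [IsProbabilityMeasure μ] {u x : ℝ} (hu0 : 0 < u) (hu1 : u < 1) :
    quantileFn (cdf μ) u ≤ x ↔ u ≤ cdf μ x := by
  constructor
  · intro h
    exact le_trans (aux_le_cdf μ hu0 hu1) (monotone_cdf μ h)
  · intro h
    exact csInf_le (aux_bddBelow μ hu0) h

lemma aux_monotoneOn [IsProbabilityMeasure μ] :
    MonotoneOn (quantileFn (cdf μ)) (Ioo (0:ℝ) 1) := by
  intro a ha b hb hab
  exact csInf_le_csInf (aux_bddBelow μ ha.1) (aux_nonempty μ hb.2)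
    (fun w hw => le_trans hab hw)

lemma aux_aemeasurable [IsProbabilityMeasure μ] :
    AEMeasurable (quantileFn (cdf μ)) (volume.restrict (Ioo (0:ℝ) 1)) :=
  aemeasurable_restrict_of_monotoneOn measurableSet_Ioo (aux_monotoneOn μ)

lemma aux_map [IsProbabilityMeasure μ] :
    (volume.restrict (Ioo (0:ℝ) 1)).map (quantileFn (cdf μ)) = μ := by
  have hfin : IsFiniteMeasure ((volume.restrict (Ioo (0:ℝ) 1)).map (quantileFn (cdf μ))) := by
    constructor
    rw [Measure.map_apply_of_aemeasurable (aux_aemeasurable μ) MeasurableSet.univ]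
    simp
  refine Measure.ext_of_Iic _ _ (fun x => ?_)
  rw [Measure.map_apply_of_aemeasurable (aux_aemeasurable μ) measurableSet_Iic,
    Measure.restrict_apply' measurableSet_Ioo]
  have hc0 : 0 ≤ cdf μ x := cdf_nonneg μ x
  have hc1 : cdf μ x ≤ 1 := cdf_le_one μ x
  have hsub1 : Ioo (0:ℝ) (cdf μ x) ⊆ quantileFn (cdf μ) ⁻¹' Iic x ∩ Ioo 0 1 := by
    intro u hu
    have hu1 : u < 1 := lt_of_lt_of_le hu.2 hc1
    exact ⟨(aux_quantile_le_iff μ hu.1 hu1).mpr hu.2.le, hu.1, hu1⟩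
  have hsub2 : quantileFn (cdf μ) ⁻¹' Iic x ∩ Ioo 0 1 ⊆ Ioc (0:ℝ) (cdf μ x) := by
    rintro u ⟨hux, hu0, hu1⟩
    exact ⟨hu0, (aux_quantile_le_iff μ hu0 hu1).mp hux⟩
  have h1 : volume (Ioo (0:ℝ) (cdf μ x)) = ENNReal.ofReal (cdf μ x) := by
    rw [Real.volume_Ioo, sub_zero]
  have h2 : volume (Ioc (0:ℝ) (cdf μ x)) = ENNReal.ofReal (cdf μ x) := by
    rw [Real.volume_Ioc, sub_zero]
  have := le_antisymm (le_trans (measure_mono hsub2) h2.le)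
    (le_trans h1.ge (measure_mono hsub1))
  rw [this, ofReal_cdf]

lemma aux_integrableOn [IsProbabilityMeasure μ] (h : Integrable (fun x : ℝ => x) μ) :
    IntegrableOn (quantileFn (cdf μ)) (Ioo (0:ℝ) 1) volume := by
  have hmap := aux_map μ
  have hint : Integrable (fun x : ℝ => x)
      ((volume.restrict (Ioo (0:ℝ) 1)).map (quantileFn (cdf μ))) := by
    rw [hmap]; exact h
  have := (integrable_map_measure (by rw [hmap]; exact h.1) (aux_aemeasurable μ)).mp hint
  exact this

lemma aux_integral_eq [IsProbabilityMeasure μ] :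
    ∫ u in Ioo (0:ℝ) 1, quantileFn (cdf μ) u = ∫ x, x ∂μ := by
  have hmap := aux_map μ
  have : ∫ x, x ∂((volume.restrict (Ioo (0:ℝ) 1)).map (quantileFn (cdf μ)))
      = ∫ u in Ioo (0:ℝ) 1, quantileFn (cdf μ) u := by
    exact integral_map (aux_aemeasurable μ)
      (by rw [hmap]; exact measurable_id.aestronglyMeasurable)
  rw [← this, hmap]

end Aux

/-- Horowitz–Manski-type bounds for a mixture component: if
`F_W = Σ_{k=0}^K γ_k F_{W_k}` with nonnegative weights summing to one, then for
every component `k` with `γ_k > 0`,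
`E[F_W⁻¹(U) | U ≤ γ_k] ≤ E[W_k] ≤ E[F_W⁻¹(U) | U ≥ 1 − γ_k]`. -/
theorem horowitz_manski_mixture_component_bounds
    {Ω : Type*} [MeasurableSpace Ω] (P : Measure Ω) [IsProbabilityMeasure P]
    (K : ℕ) (W : Ω → ℝ) (Wk : ℕ → Ω → ℝ) (γ : ℕ → ℝ)
    (hWm : Measurable W) (hWkm : ∀ k ≤ K, Measurable (Wk k))
    (hW : Integrable W P) (hWk : ∀ k ≤ K, Integrable (Wk k) P)
    (hγ : ∀ k ≤ K, 0 ≤ γ k) (hsum : ∑ k ∈ Finset.range (K + 1), γ k = 1)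
    (hmix : ∀ w, cdfOf P W w = ∑ k ∈ Finset.range (K + 1), γ k * cdfOf P (Wk k) w)
    (k : ℕ) (hk : k ≤ K) (hγk : 0 < γ k) :
    lowerTrunc (cdfOf P W) (γ k) ≤ ∫ ω, Wk k ω ∂P ∧
      ∫ ω, Wk k ω ∂P ≤ upperTrunc (cdfOf P W) (γ k) := by
  classical
  have hkmem : k ∈ Finset.range (K + 1) := Finset.mem_range.mpr (Nat.lt_succ_of_le hk)
  have hγle1 : γ k ≤ 1 := by
    rw [← hsum]
    exact Finset.single_le_sum
      (fun j hj => hγ j (Nat.lt_succ_iff.mp (Finset.mem_range.mp hj))) hkmem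
  have hγne : γ k ≠ 0 := ne_of_gt hγk
  -- cdfOf equals the cdf of the pushforward measure
  have hmapW : IsProbabilityMeasure (P.map W) := Measure.isProbabilityMeasure_map hWm.aemeasurable
  have hmapk : IsProbabilityMeasure (P.map (Wk k)) :=
    Measure.isProbabilityMeasure_map (hWkm k hk).aemeasurable
  have key : ∀ (X : Ω → ℝ), Measurable X → ∀ [IsProbabilityMeasure (P.map X)],
      cdfOf P X = cdf (P.map X) := by
    intro X hX _
    funext w
    rw [cdf_eq_real, measureReal_def, Measure.map_apply hX measurableSet_Iic, cdfOf]
    rfl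
  have hFW : cdfOf P W = cdf (P.map W) := key W hWm
  have hFk : cdfOf P (Wk k) = cdf (P.map (Wk k)) := key (Wk k) (hWkm k hk)
  -- bounds on cdfOf
  have hcdf_nonneg : ∀ (X : Ω → ℝ) w, 0 ≤ cdfOf P X w := fun X w => ENNReal.toReal_nonneg
  have hcdf_le_one : ∀ (X : Ω → ℝ) w, cdfOf P X w ≤ 1 := by
    intro X w
    have : P {ω | X ω ≤ w} ≤ 1 := prob_le_one
    calc (P {ω | X ω ≤ w}).toReal ≤ (1 : ENNReal).toReal :=
          ENNReal.toReal_mono ENNReal.one_ne_top this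
      _ = 1 := by simp
  -- mixture inequalities
  have hlow : ∀ w, γ k * cdf (P.map (Wk k)) w ≤ cdf (P.map W) w := by
    intro w
    rw [← hFW, ← hFk, hmix w]
    exact Finset.single_le_sum
      (fun j hj => mul_nonneg (hγ j (Nat.lt_succ_iff.mp (Finset.mem_range.mp hj)))
        (hcdf_nonneg _ w)) hkmem
  have hhigh : ∀ w, cdf (P.map W) w ≤ γ k * cdf (P.map (Wk k)) w + (1 - γ k) := by
    intro w
    rw [← hFW, ← hFk, hmix w]
    have herase : ∑ j ∈ (Finset.range (K + 1)).erase k, γ j * cdfOf P (Wk j) w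
        ≤ ∑ j ∈ (Finset.range (K + 1)).erase k, γ j := by
      refine Finset.sum_le_sum (fun j hj => ?_)
      have hjK : j ≤ K := Nat.lt_succ_iff.mp (Finset.mem_range.mp (Finset.mem_of_mem_erase hj))
      calc γ j * cdfOf P (Wk j) w ≤ γ j * 1 :=
            mul_le_mul_of_nonneg_left (hcdf_le_one _ w) (hγ j hjK)
        _ = γ j := mul_one _
    have hsum_erase : ∑ j ∈ (Finset.range (K + 1)).erase k, γ j = 1 - γ k := by
      have := Finset.sum_erase_add (Finset.range (K + 1)) γ hkmem
      linarith [this, hsum]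
    calc ∑ j ∈ Finset.range (K + 1), γ j * cdfOf P (Wk j) w
        = (∑ j ∈ (Finset.range (K + 1)).erase k, γ j * cdfOf P (Wk j) w)
            + γ k * cdfOf P (Wk k) w :=
          (Finset.sum_erase_add (Finset.range (K + 1)) _ hkmem).symm
      _ ≤ (1 - γ k) + γ k * cdfOf P (Wk k) w := by
          refine add_le_add_left ?_ _
          rw [← hsum_erase]; exact herase
      _ = γ k * cdfOf P (Wk k) w + (1 - γ k) := by ring
  -- pointwise quantile inequalities on (0,1)
  have hL1 : ∀ u ∈ Set.Ioo (0:ℝ) 1,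
      quantileFn (cdf (P.map W)) (γ k * u) ≤ quantileFn (cdf (P.map (Wk k))) u := by
    intro u hu
    refine csInf_le_csInf (aux_bddBelow _ (mul_pos hγk hu.1)) (aux_nonempty _ hu.2)
      (fun w hw => ?_)
    exact le_trans (mul_le_mul_of_nonneg_left hw hγk.le) (hlow w)
  have hL2 : ∀ u ∈ Set.Ioo (0:ℝ) 1,
      quantileFn (cdf (P.map (Wk k))) u ≤ quantileFn (cdf (P.map W)) (γ k * u + (1 - γ k)) := by
    intro u hu
    have harg : γ k * u + (1 - γ k) < 1 := by nlinarith [hu.2]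
    refine csInf_le_csInf (aux_bddBelow _ hu.1) (aux_nonempty _ harg) (fun w hw => ?_)
    have := le_trans hw (hhigh w)
    have : γ k * u ≤ γ k * cdf (P.map (Wk k)) w := by linarith
    exact le_of_mul_le_mul_left this hγk
  -- integral representation of the mean of Wk k
  have hintk : Integrable (id : ℝ → ℝ) (P.map (Wk k)) := by
    rw [integrable_map_measure measurable_id.aestronglyMeasurable (hWkm k hk).aemeasurable]
    exact hWk k hk
  have hintW : Integrable (id : ℝ → ℝ) (P.map W) := by
    rw [integrable_map_measure measurable_id.aestronglyMeasurable hWm.aemeasurable]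
    exact hW
  have hmeanE : ∫ x, x ∂(P.map (Wk k)) = ∫ ω, Wk k ω ∂P :=
    integral_map (hWkm k hk).aemeasurable measurable_id.aestronglyMeasurable
  have hEk : ∫ u in Set.Ioo (0:ℝ) 1, quantileFn (cdf (P.map (Wk k))) u = ∫ ω, Wk k ω ∂P := by
    rw [aux_integral_eq, hmeanE]
  -- integrability facts
  have hIk : IntegrableOn (quantileFn (cdf (P.map (Wk k)))) (Set.Ioo (0:ℝ) 1) volume :=
    aux_integrableOn _ hintk
  have hIW : IntegrableOn (quantileFn (cdf (P.map W))) (Set.Ioo (0:ℝ) 1) volume :=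
    aux_integrableOn _ hintW
  have hIWIoc : IntegrableOn (quantileFn (cdf (P.map W))) (Set.Ioc (0:ℝ) 1) volume := by
    rw [IntegrableOn, ← Measure.restrict_congr_set Ioo_ae_eq_Ioc]
    exact hIW
  set Q := quantileFn (cdf (P.map W)) with hQ
  set Qk := quantileFn (cdf (P.map (Wk k))) with hQk
  have hII : IntervalIntegrable Q volume 0 1 := by
    rw [intervalIntegrable_iff_integrableOn_Ioc_of_le zero_le_one]
    exact hIWIoc
  constructor
  · -- lower bound
    have hII2 : IntervalIntegrable Q volume 0 (γ k) := by
      rw [intervalIntegrable_iff_integrableOn_Ioc_of_le hγk.le]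
      exact hIWIoc.mono_set (Set.Ioc_subset_Ioc le_rfl hγle1)
    have hcomp : IntervalIntegrable (fun x => Q (γ k * x)) volume 0 1 := by
      have := hII2.comp_mul_left (c := γ k)
      simpa [hγne] using this
    have hcompIoo : IntegrableOn (fun x => Q (γ k * x)) (Set.Ioo (0:ℝ) 1) volume := by
      rw [IntegrableOn, Measure.restrict_congr_set Ioo_ae_eq_Ioc]
      exact (intervalIntegrable_iff_integrableOn_Ioc_of_le zero_le_one).mp hcomp
    have hchg : (∫ x in (0:ℝ)..1, Q (γ k * x)) = (γ k)⁻¹ * ∫ u in Set.Ioc (0:ℝ) (γ k), Q u := by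
      rw [intervalIntegral.integral_comp_mul_left Q hγne, mul_zero, mul_one,
        intervalIntegral.integral_of_le hγk.le, smul_eq_mul]
    have hmono : ∫ x in Set.Ioo (0:ℝ) 1, Q (γ k * x) ≤ ∫ x in Set.Ioo (0:ℝ) 1, Qk x :=
      setIntegral_mono_on hcompIoo hIk measurableSet_Ioo (fun u hu => hL1 u hu)
    have hfin : lowerTrunc (cdfOf P W) (γ k) = ∫ x in Set.Ioo (0:ℝ) 1, Q (γ k * x) := by
      unfold lowerTrunc
      rw [hFW, ← hchg, intervalIntegral.integral_of_le zero_le_one,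
        ← setIntegral_congr_set Ioo_ae_eq_Ioc]
    rw [hfin, ← hEk]
    exact hmono
  · -- upper bound
    have hII3 : IntervalIntegrable Q volume (1 - γ k) 1 := by
      rw [intervalIntegrable_iff_integrableOn_Ioc_of_le (by linarith)]
      exact hIWIoc.mono_set (Set.Ioc_subset_Ioc (by linarith) le_rfl)
    have hcomp : IntervalIntegrable (fun x => Q (γ k * x + (1 - γ k))) volume 0 1 := by
      have h1 := hII3.comp_add_right (1 - γ k)
      have h2 := h1.comp_mul_left (c := γ k)
      have e1 : (1 - γ k - (1 - γ k)) / γ k = 0 := by field_simp; ring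
      have e2 : (1 - (1 - γ k)) / γ k = 1 := by field_simp; ring
      rw [e1, e2] at h2
      exact h2
    have hcompIoo : IntegrableOn (fun x => Q (γ k * x + (1 - γ k))) (Set.Ioo (0:ℝ) 1) volume := by
      rw [IntegrableOn, Measure.restrict_congr_set Ioo_ae_eq_Ioc]
      exact (intervalIntegrable_iff_integrableOn_Ioc_of_le zero_le_one).mp hcomp
    have hchg : (∫ x in (0:ℝ)..1, Q (γ k * x + (1 - γ k)))
        = (γ k)⁻¹ * ∫ u in Set.Ioc (1 - γ k) (1:ℝ), Q u := by
      rw [intervalIntegral.integral_comp_mul_add Q hγne (1 - γ k)]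
      have e1 : γ k * 0 + (1 - γ k) = 1 - γ k := by ring
      have e2 : γ k * 1 + (1 - γ k) = 1 := by ring
      rw [e1, e2, intervalIntegral.integral_of_le (by linarith), smul_eq_mul]
    have hmono : ∫ x in Set.Ioo (0:ℝ) 1, Qk x ≤ ∫ x in Set.Ioo (0:ℝ) 1, Q (γ k * x + (1 - γ k)) :=
      setIntegral_mono_on hIk hcompIoo measurableSet_Ioo (fun u hu => hL2 u hu)
    have hfin : upperTrunc (cdfOf P W) (γ k) = ∫ x in Set.Ioo (0:ℝ) 1, Q (γ k * x + (1 - γ k)) := by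
      unfold upperTrunc
      rw [hFW, setIntegral_congr_set Ico_ae_eq_Ioc, ← hchg,
        intervalIntegral.integral_of_le zero_le_one,
        ← setIntegral_congr_set Ioo_ae_eq_Ioc]
    rw [hfin, ← hEk]
    exact hmono
end

section
/- (Bounds for a weighted average of mixture components.) Let W, W_0, …, W_K be integrable real random variables and γ_0, …, γ_K ≥ 0 with Σ_{k=0}^{K} γ_k = 1, such that the CDFs satisfy F_W(w) = Σ_{k=0}^{K} γ_k · F_{W_k}(w) for all w ∈ ℝ. Then for all indices 0 ≤ l ≤ l' ≤ K with γ̄ := Σ_{k=l}^{l'} γ_k > 0: E[F_W^{-1}(U) | U ≤ γ̄] ≤ Σ_{k=l}^{l'} (γ_k/γ̄) · E[W_k] ≤ E[F_W^{-1}(U) | U ≥ 1 − γ̄]. -/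
open MeasureTheory ProbabilityTheory

open Set Filter

section Aux
variable (μ : Measure ℝ) [IsProbabilityMeasure μ]

lemma quantile_le_iff {u w : ℝ} (hu0 : 0 < u) (hu1 : u < 1) :
    quantileFn (cdf μ) u ≤ w ↔ u ≤ cdf μ w := by
  have hS : {x : ℝ | u ≤ cdf μ x}.Nonempty :=
    ((tendsto_cdf_atTop μ).eventually (eventually_ge_nhds hu1)).exists
  have hB : BddBelow {x : ℝ | u ≤ cdf μ x} := by
    obtain ⟨b, hb⟩ := eventually_atBot.mp
      ((tendsto_cdf_atBot μ).eventually (eventually_lt_nhds hu0))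
    refine ⟨b, fun x hx => ?_⟩
    by_contra hbx
    exact absurd hx (not_le.mpr (hb x (le_of_not_ge hbx)))
  constructor
  · intro h
    have key : ∀ y, w < y → u ≤ cdf μ y := by
      intro y hy
      obtain ⟨x, hxS, hxy⟩ := exists_lt_of_csInf_lt hS (lt_of_le_of_lt h hy)
      exact hxS.trans (monotone_cdf μ hxy.le)
    have hc : Tendsto (cdf μ) (nhdsWithin w (Ioi w)) (nhds (cdf μ w)) :=
      ((cdf μ).right_continuous w).mono Ioi_subset_Ici_self
    exact ge_of_tendsto hc (eventually_nhdsWithin_of_forall fun y hy => key y hy)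
  · intro h
    exact csInf_le hB h

/-- measurable version of the quantile function, zeroed outside `(0,1)`. -/
noncomputable def qres (F : ℝ → ℝ) : ℝ → ℝ :=
  fun u => if u ∈ Set.Ioo (0:ℝ) 1 then quantileFn F u else 0

lemma qres_measurable : Measurable (qres (cdf μ)) := by
  apply measurable_of_Iic
  intro w
  have hset : qres (cdf μ) ⁻¹' Iic w =
      (Ioo (0:ℝ) 1 ∩ Iic (cdf μ w)) ∪ (if 0 ≤ w then (Ioo (0:ℝ) 1)ᶜ else ∅) := by
    ext u
    constructor
    · intro h
      simp only [mem_preimage, mem_Iic] at h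
      by_cases hu : u ∈ Ioo (0:ℝ) 1
      · exact Or.inl ⟨hu, (quantile_le_iff μ hu.1 hu.2).mp (by simpa [qres, hu] using h)⟩
      · have h0w : (0:ℝ) ≤ w := by simpa [qres, hu] using h
        right
        simp [if_pos h0w, hu]
    · intro h
      rcases h with ⟨hu, hw⟩ | h
      · simp only [mem_preimage, mem_Iic, qres, if_pos hu]
        exact (quantile_le_iff μ hu.1 hu.2).mpr hw
      · split_ifs at h with h0
        · simp only [mem_compl_iff] at h
          simp only [mem_preimage, mem_Iic, qres]
          rw [if_neg h]
          exact h0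
        · exact absurd h (notMem_empty u)
  rw [hset]
  refine (measurableSet_Ioo.inter measurableSet_Iic).union ?_
  split_ifs with h
  · exact measurableSet_Ioo.compl
  · exact MeasurableSet.empty

lemma qres_eq {u : ℝ} (hu : u ∈ Ioo (0:ℝ) 1) : qres (cdf μ) u = quantileFn (cdf μ) u :=
  if_pos hu

lemma quantile_mono {u v : ℝ} (hu : u ∈ Ioo (0:ℝ) 1) (hv : v ∈ Ioo (0:ℝ) 1) (huv : u ≤ v) :
    quantileFn (cdf μ) u ≤ quantileFn (cdf μ) v := by
  have h1 : v ≤ cdf μ (quantileFn (cdf μ) v) := (quantile_le_iff μ hv.1 hv.2).mp le_rfl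
  exact (quantile_le_iff μ hu.1 hu.2).mpr (huv.trans h1)

lemma qres_map : Measure.map (qres (cdf μ)) (volume.restrict (Ioo 0 1)) = μ := by
  have hm := qres_measurable μ
  haveI : IsFiniteMeasure (Measure.map (qres (cdf μ)) (volume.restrict (Ioo (0:ℝ) 1))) := by
    constructor
    rw [Measure.map_apply hm MeasurableSet.univ]
    simp [Real.volume_Ioo]
  refine Measure.ext_of_Iic _ _ fun w => ?_
  rw [Measure.map_apply hm measurableSet_Iic,
    Measure.restrict_apply (hm measurableSet_Iic)]
  have h0 := cdf_nonneg μ w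
  have h1 := cdf_le_one μ w
  have hset : qres (cdf μ) ⁻¹' Iic w ∩ Ioo 0 1 = Iic (cdf μ w) ∩ Ioo 0 1 := by
    ext u
    simp only [mem_inter_iff, mem_preimage, mem_Iic, and_congr_left_iff]
    intro hu
    rw [qres_eq μ hu, quantile_le_iff μ hu.1 hu.2]
  rw [hset, ← ofReal_cdf μ w]
  apply le_antisymm
  · calc volume (Iic (cdf μ w) ∩ Ioo 0 1) ≤ volume (Ioc 0 (cdf μ w)) :=
          measure_mono (fun u hu => ⟨hu.2.1, hu.1⟩)
      _ = ENNReal.ofReal (cdf μ w) := by rw [Real.volume_Ioc, sub_zero]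
  · calc ENNReal.ofReal (cdf μ w) = volume (Ioo 0 (cdf μ w)) := by
          rw [Real.volume_Ioo, sub_zero]
      _ ≤ volume (Iic (cdf μ w) ∩ Ioo 0 1) :=
          measure_mono (fun u hu => ⟨hu.2.le, hu.1, lt_of_lt_of_le hu.2 h1⟩)

lemma qres_integral (g : ℝ → ℝ) (hg : Measurable g) :
    ∫ x, g x ∂μ = ∫ u in Ioo (0:ℝ) 1, g (qres (cdf μ) u) := by
  have h := integral_map (μ := volume.restrict (Ioo (0:ℝ) 1))
    (qres_measurable μ).aemeasurable hg.aestronglyMeasurable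
  rw [qres_map μ] at h
  exact h

lemma qres_integrable (hInt : Integrable id μ) :
    Integrable (qres (cdf μ)) (volume.restrict (Ioo (0:ℝ) 1)) := by
  rw [← qres_map μ] at hInt
  exact (integrable_map_measure aestronglyMeasurable_id
    (qres_measurable μ).aemeasurable).mp hInt

lemma lower_key (hInt : Integrable id μ) {g : ℝ} (h0 : 0 < g) (h1 : g < 1) :
    ∫ u in Ioc (0:ℝ) g, quantileFn (cdf μ) u
      = g * quantileFn (cdf μ) g - ∫ x, max (quantileFn (cdf μ) g - x) 0 ∂μ := by
  set c := quantileFn (cdf μ) g with hc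
  set q := qres (cdf μ) with hq
  have hgIoo : g ∈ Ioo (0:ℝ) 1 := ⟨h0, h1⟩
  have hqint := qres_integrable μ hInt
  have hmg : Measurable fun x : ℝ => max (c - x) 0 :=
    (measurable_const.sub measurable_id).max measurable_const
  have h2 : ∫ x, max (c - x) 0 ∂μ = ∫ u in Ioo (0:ℝ) 1, max (c - q u) 0 :=
    qres_integral μ _ hmg
  have hsub1 : Ioc (0:ℝ) g ⊆ Ioo (0:ℝ) 1 := fun u hu => ⟨hu.1, lt_of_le_of_lt hu.2 h1⟩
  have hsub2 : Ioo g (1:ℝ) ⊆ Ioo (0:ℝ) 1 := fun u hu => ⟨h0.trans hu.1, hu.2⟩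
  have hintfull : Integrable (fun u => max (c - q u) 0) (volume.restrict (Ioo (0:ℝ) 1)) :=
    ((integrable_const c).sub hqint).pos_part
  have hint1 : Integrable (fun u => max (c - q u) 0) (volume.restrict (Ioc (0:ℝ) g)) :=
    hintfull.mono_measure (Measure.restrict_mono hsub1 le_rfl)
  have hint2 : Integrable (fun u => max (c - q u) 0) (volume.restrict (Ioo g (1:ℝ))) :=
    hintfull.mono_measure (Measure.restrict_mono hsub2 le_rfl)
  have hsplit : Ioo (0:ℝ) 1 = Ioc 0 g ∪ Ioo g 1 := (Set.Ioc_union_Ioo_eq_Ioo h0.le h1).symm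
  have hdisj : Disjoint (Ioc (0:ℝ) g) (Ioo g 1) :=
    Set.disjoint_left.mpr fun u hu hu' => absurd hu.2 (not_le.mpr hu'.1)
  have hz : ∫ u in Ioo g (1:ℝ), max (c - q u) 0 = 0 := by
    rw [setIntegral_congr_fun measurableSet_Ioo (g := fun _ => (0:ℝ)) fun u hu => ?_]
    · simp
    · have huIoo : u ∈ Ioo (0:ℝ) 1 := hsub2 hu
      have : c ≤ q u := by
        rw [hq, qres_eq μ huIoo]
        exact quantile_mono μ hgIoo huIoo hu.1.le
      simp [max_eq_right, sub_nonpos.mpr this]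
  have hmain : ∫ u in Ioc (0:ℝ) g, max (c - q u) 0
      = ∫ u in Ioc (0:ℝ) g, (c - quantileFn (cdf μ) u) := by
    refine setIntegral_congr_fun measurableSet_Ioc fun u hu => ?_
    have huIoo : u ∈ Ioo (0:ℝ) 1 := hsub1 hu
    rw [hq, qres_eq μ huIoo]
    exact max_eq_left (sub_nonneg.mpr (quantile_mono μ huIoo hgIoo hu.2))
  have hQint : Integrable (fun u => quantileFn (cdf μ) u) (volume.restrict (Ioc (0:ℝ) g)) := by
    refine (hqint.mono_measure (Measure.restrict_mono hsub1 le_rfl)).congr ?_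
    exact (ae_restrict_iff' measurableSet_Ioc).mpr
      (Filter.Eventually.of_forall fun u hu => (qres_eq μ (hsub1 hu)))
  have hvol : (volume (Ioc (0:ℝ) g)).toReal = g := by
    rw [Real.volume_Ioc, sub_zero, ENNReal.toReal_ofReal h0.le]
  have hsubint : ∫ u in Ioc (0:ℝ) g, (c - quantileFn (cdf μ) u)
      = g * c - ∫ u in Ioc (0:ℝ) g, quantileFn (cdf μ) u := by
    rw [integral_sub ((integrableOn_const_iff (C := c)).mpr (Or.inr (by
        rw [Real.volume_Ioc]; exact ENNReal.ofReal_lt_top))) hQint]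
    rw [setIntegral_const, measureReal_def, hvol, smul_eq_mul]
  rw [h2, hsplit, setIntegral_union hdisj measurableSet_Ioo hint1 hint2, hz, add_zero,
    hmain, hsubint]
  ring

lemma upper_key (hInt : Integrable id μ) {g : ℝ} (h0 : 0 < g) (h1 : g < 1) :
    ∫ u in Ico (1 - g) (1:ℝ), quantileFn (cdf μ) u
      = g * quantileFn (cdf μ) (1 - g) + ∫ x, max (x - quantileFn (cdf μ) (1 - g)) 0 ∂μ := by
  set d := quantileFn (cdf μ) (1 - g) with hd
  set q := qres (cdf μ) with hq
  have hb0 : (0:ℝ) < 1 - g := by linarith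
  have hb1 : (1:ℝ) - g < 1 := by linarith
  have hbIoo : (1 - g) ∈ Ioo (0:ℝ) 1 := ⟨hb0, hb1⟩
  have hqint := qres_integrable μ hInt
  have hmg : Measurable fun x : ℝ => max (x - d) 0 :=
    (measurable_id.sub measurable_const).max measurable_const
  have h2 : ∫ x, max (x - d) 0 ∂μ = ∫ u in Ioo (0:ℝ) 1, max (q u - d) 0 :=
    qres_integral μ _ hmg
  have hsub1 : Ico (1 - g) (1:ℝ) ⊆ Ioo (0:ℝ) 1 := fun u hu => ⟨lt_of_lt_of_le hb0 hu.1, hu.2⟩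
  have hsub2 : Ioo (0:ℝ) (1 - g) ⊆ Ioo (0:ℝ) 1 := fun u hu => ⟨hu.1, hu.2.trans hb1⟩
  have hintfull : Integrable (fun u => max (q u - d) 0) (volume.restrict (Ioo (0:ℝ) 1)) :=
    (hqint.sub (integrable_const d)).pos_part
  have hint1 : Integrable (fun u => max (q u - d) 0) (volume.restrict (Ioo (0:ℝ) (1 - g))) :=
    hintfull.mono_measure (Measure.restrict_mono hsub2 le_rfl)
  have hint2 : Integrable (fun u => max (q u - d) 0) (volume.restrict (Ico (1 - g) (1:ℝ))) :=
    hintfull.mono_measure (Measure.restrict_mono hsub1 le_rfl)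
  have hsplit : Ioo (0:ℝ) 1 = Ioo 0 (1 - g) ∪ Ico (1 - g) 1 :=
    (Set.Ioo_union_Ico_eq_Ioo hb0 hb1.le).symm
  have hdisj : Disjoint (Ioo (0:ℝ) (1 - g)) (Ico (1 - g) 1) :=
    Set.disjoint_left.mpr fun u hu hu' => absurd hu'.1 (not_le.mpr hu.2)
  have hz : ∫ u in Ioo (0:ℝ) (1 - g), max (q u - d) 0 = 0 := by
    rw [setIntegral_congr_fun measurableSet_Ioo (g := fun _ => (0:ℝ)) fun u hu => ?_]
    · simp
    · have huIoo : u ∈ Ioo (0:ℝ) 1 := hsub2 hu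
      have : q u ≤ d := by
        rw [hq, qres_eq μ huIoo]
        exact quantile_mono μ huIoo hbIoo hu.2.le
      simp [max_eq_right, sub_nonpos.mpr this]
  have hmain : ∫ u in Ico (1 - g) (1:ℝ), max (q u - d) 0
      = ∫ u in Ico (1 - g) (1:ℝ), (quantileFn (cdf μ) u - d) := by
    refine setIntegral_congr_fun measurableSet_Ico fun u hu => ?_
    have huIoo : u ∈ Ioo (0:ℝ) 1 := hsub1 hu
    rw [hq, qres_eq μ huIoo]
    exact max_eq_left (sub_nonneg.mpr (quantile_mono μ hbIoo huIoo hu.1))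
  have hQint : Integrable (fun u => quantileFn (cdf μ) u) (volume.restrict (Ico (1 - g) (1:ℝ))) := by
    refine (hqint.mono_measure (Measure.restrict_mono hsub1 le_rfl)).congr ?_
    exact (ae_restrict_iff' measurableSet_Ico).mpr
      (Filter.Eventually.of_forall fun u hu => (qres_eq μ (hsub1 hu)))
  have hvol : (volume (Ico (1 - g) (1:ℝ))).toReal = g := by
    rw [Real.volume_Ico]
    rw [show (1:ℝ) - (1 - g) = g by ring, ENNReal.toReal_ofReal h0.le]
  have hsubint : ∫ u in Ico (1 - g) (1:ℝ), (quantileFn (cdf μ) u - d)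
      = (∫ u in Ico (1 - g) (1:ℝ), quantileFn (cdf μ) u) - g * d := by
    rw [integral_sub hQint ((integrableOn_const_iff (C := d)).mpr (Or.inr (by
        rw [Real.volume_Ico]; exact ENNReal.ofReal_lt_top)))]
    rw [setIntegral_const, measureReal_def, hvol, smul_eq_mul]
  rw [h2, hsplit, setIntegral_union hdisj measurableSet_Ico hint1 hint2, hz, zero_add,
    hmain, hsubint]
  ring
end Aux

/-- bounds for a weighted average of mixture components: if
`F_W = Σ_{k=0}^K γ_k F_{W_k}` with nonnegative weights summing to one, then for
all `l ≤ l' ≤ K` with `γ̄ := Σ_{k=l}^{l'} γ_k > 0`,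
`E[F_W⁻¹(U) | U ≤ γ̄] ≤ Σ_{k=l}^{l'} (γ_k/γ̄) E[W_k] ≤ E[F_W⁻¹(U) | U ≥ 1 − γ̄]`. -/
theorem weighted_average_mixture_bounds
    {Ω : Type*} [MeasurableSpace Ω] (P : Measure Ω) [IsProbabilityMeasure P]
    (K : ℕ) (W : Ω → ℝ) (Wk : ℕ → Ω → ℝ) (γ : ℕ → ℝ)
    (hWm : Measurable W) (hWkm : ∀ k ≤ K, Measurable (Wk k))
    (hW : Integrable W P) (hWk : ∀ k ≤ K, Integrable (Wk k) P)
    (hγ : ∀ k ≤ K, 0 ≤ γ k) (hsum : ∑ k ∈ Finset.range (K + 1), γ k = 1)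
    (hmix : ∀ w, cdfOf P W w = ∑ k ∈ Finset.range (K + 1), γ k * cdfOf P (Wk k) w)
    (l l' : ℕ) (hll' : l ≤ l') (hl'K : l' ≤ K)
    (hγbar : 0 < ∑ k ∈ Finset.Icc l l', γ k) :
    lowerTrunc (cdfOf P W) (∑ k ∈ Finset.Icc l l', γ k)
        ≤ ∑ k ∈ Finset.Icc l l',
            (γ k / ∑ j ∈ Finset.Icc l l', γ j) * ∫ ω, Wk k ω ∂P ∧
      ∑ k ∈ Finset.Icc l l',
          (γ k / ∑ j ∈ Finset.Icc l l', γ j) * ∫ ω, Wk k ω ∂P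
        ≤ upperTrunc (cdfOf P W) (∑ k ∈ Finset.Icc l l', γ k) := by
  classical
  set S := Finset.Icc l l' with hSdef
  set g := ∑ k ∈ S, γ k with hg
  have hγ' : ∀ k ∈ Finset.range (K + 1), 0 ≤ γ k := fun k hk =>
    hγ k (Nat.lt_succ_iff.mp (Finset.mem_range.mp hk))
  have hsubS : S ⊆ Finset.range (K + 1) := by
    intro k hk
    exact Finset.mem_range.mpr (Nat.lt_succ_of_le ((Finset.mem_Icc.mp hk).2.trans hl'K))
  have hmemK : ∀ k ∈ S, k ≤ K := fun k hk => (Finset.mem_Icc.mp hk).2.trans hl'K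
  have hg1 : g ≤ 1 := hsum ▸ Finset.sum_le_sum_of_subset_of_nonneg hsubS
    (fun k hk _ => hγ' k hk)
  set μ := Measure.map W P with hμ
  haveI : IsProbabilityMeasure μ := Measure.isProbabilityMeasure_map hWm.aemeasurable
  have hF : cdfOf P W = ⇑(cdf μ) := by
    funext w
    rw [cdf_eq_real, measureReal_def, hμ, Measure.map_apply hWm measurableSet_Iic]
    rfl
  have hintid : Integrable id μ := by
    rw [hμ]
    exact (integrable_map_measure aestronglyMeasurable_id hWm.aemeasurable).mpr hW
  have hmap : μ = ∑ k ∈ Finset.range (K + 1), ENNReal.ofReal (γ k) • Measure.map (Wk k) P := by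
    haveI : IsFiniteMeasure
        (∑ k ∈ Finset.range (K + 1), ENNReal.ofReal (γ k) • Measure.map (Wk k) P) := by
      constructor
      rw [Measure.finset_sum_apply]
      refine ENNReal.sum_lt_top.mpr fun k hk => ?_
      rw [Measure.smul_apply, smul_eq_mul]
      exact ENNReal.mul_lt_top ENNReal.ofReal_lt_top (measure_lt_top _ _)
    refine Measure.ext_of_Iic μ _ fun w => ?_
    rw [hμ, Measure.map_apply hWm measurableSet_Iic, Measure.finset_sum_apply]
    have hL : P (W ⁻¹' Iic w) = ENNReal.ofReal (cdfOf P W w) :=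
      (ENNReal.ofReal_toReal (measure_ne_top _ _)).symm
    rw [hL, hmix w, ENNReal.ofReal_sum_of_nonneg
      (f := fun k => γ k * cdfOf P (Wk k) w)
      (fun k hk => mul_nonneg (hγ' k hk) ENNReal.toReal_nonneg)]
    refine Finset.sum_congr rfl fun k hk => ?_
    rw [ENNReal.ofReal_mul (hγ' k hk), Measure.smul_apply, smul_eq_mul,
      Measure.map_apply (hWkm k (Nat.lt_succ_iff.mp (Finset.mem_range.mp hk)))
        measurableSet_Iic]
    congr 1
    exact ENNReal.ofReal_toReal (measure_ne_top _ _)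
  have hmixint : ∀ f : ℝ → ℝ, Measurable f →
      (∀ k ≤ K, Integrable (fun ω => f (Wk k ω)) P) →
      ∫ x, f x ∂μ = ∑ k ∈ Finset.range (K + 1), γ k * ∫ ω, f (Wk k ω) ∂P := by
    intro f hf hfint
    rw [hmap, integral_finset_sum_measure fun k hk => ?_]
    · refine Finset.sum_congr rfl fun k hk => ?_
      have hkK := Nat.lt_succ_iff.mp (Finset.mem_range.mp hk)
      rw [integral_smul_measure, ENNReal.toReal_ofReal (hγ' k hk), smul_eq_mul,
        integral_map (hWkm k hkK).aemeasurable hf.aestronglyMeasurable]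
    · have hkK := Nat.lt_succ_iff.mp (Finset.mem_range.mp hk)
      refine Integrable.smul_measure ?_ ENNReal.ofReal_ne_top
      exact (integrable_map_measure hf.aestronglyMeasurable
        (hWkm k hkK).aemeasurable).mpr (hfint k hkK)
  rcases lt_or_eq_of_le hg1 with hglt | hgeq
  · constructor
    · -- lower bound, g < 1
      set c := quantileFn (cdf μ) g with hc
      have key := lower_key μ hintid hγbar hglt
      have hmix1 : ∫ x, max (c - x) 0 ∂μ
          = ∑ k ∈ Finset.range (K + 1), γ k * ∫ ω, max (c - Wk k ω) 0 ∂P :=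
        hmixint _ ((measurable_const.sub measurable_id).max measurable_const)
          (fun k hk => ((integrable_const c).sub (hWk k hk)).pos_part)
      have hstep1 : ∑ k ∈ S, γ k * (c - ∫ ω, Wk k ω ∂P) ≤ ∫ x, max (c - x) 0 ∂μ := by
        rw [hmix1]
        refine le_trans (Finset.sum_le_sum fun k hk => ?_)
          (Finset.sum_le_sum_of_subset_of_nonneg hsubS fun k hk _ =>
            mul_nonneg (hγ' k hk) (integral_nonneg fun ω => le_max_right _ _))
        refine mul_le_mul_of_nonneg_left ?_ (hγ k (hmemK k hk))
        have heq : c - ∫ ω, Wk k ω ∂P = ∫ ω, (c - Wk k ω) ∂P := by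
          rw [integral_sub (integrable_const c) (hWk k (hmemK k hk)), integral_const]
          simp
        rw [heq]
        exact integral_mono ((integrable_const c).sub (hWk k (hmemK k hk)))
          ((integrable_const c).sub (hWk k (hmemK k hk))).pos_part
          (fun ω => le_max_left _ _)
      have hexp : ∑ k ∈ S, γ k * (c - ∫ ω, Wk k ω ∂P)
          = g * c - ∑ k ∈ S, γ k * ∫ ω, Wk k ω ∂P := by
        simp_rw [mul_sub]
        rw [Finset.sum_sub_distrib, ← Finset.sum_mul, ← hg]
      rw [lowerTrunc, hF, key]
      calc g⁻¹ * (g * c - ∫ x, max (c - x) 0 ∂μ)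
          ≤ g⁻¹ * (g * c - ∑ k ∈ S, γ k * (c - ∫ ω, Wk k ω ∂P)) :=
            mul_le_mul_of_nonneg_left (sub_le_sub_left hstep1 _) (inv_nonneg.mpr hγbar.le)
        _ = ∑ k ∈ S, γ k / g * ∫ ω, Wk k ω ∂P := by
            rw [hexp, sub_sub_cancel, Finset.mul_sum]
            exact Finset.sum_congr rfl fun k _ => by rw [div_eq_mul_inv]; ring
    · -- upper bound, g < 1
      set d := quantileFn (cdf μ) (1 - g) with hd
      have key := upper_key μ hintid hγbar hglt
      have hmix1 : ∫ x, max (x - d) 0 ∂μ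
          = ∑ k ∈ Finset.range (K + 1), γ k * ∫ ω, max (Wk k ω - d) 0 ∂P :=
        hmixint _ ((measurable_id.sub measurable_const).max measurable_const)
          (fun k hk => ((hWk k hk).sub (integrable_const d)).pos_part)
      have hstep2 : ∑ k ∈ S, γ k * ((∫ ω, Wk k ω ∂P) - d) ≤ ∫ x, max (x - d) 0 ∂μ := by
        rw [hmix1]
        refine le_trans (Finset.sum_le_sum fun k hk => ?_)
          (Finset.sum_le_sum_of_subset_of_nonneg hsubS fun k hk _ =>
            mul_nonneg (hγ' k hk) (integral_nonneg fun ω => le_max_right _ _))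
        refine mul_le_mul_of_nonneg_left ?_ (hγ k (hmemK k hk))
        have heq : (∫ ω, Wk k ω ∂P) - d = ∫ ω, (Wk k ω - d) ∂P := by
          rw [integral_sub (hWk k (hmemK k hk)) (integrable_const d), integral_const]
          simp
        rw [heq]
        exact integral_mono ((hWk k (hmemK k hk)).sub (integrable_const d))
          ((hWk k (hmemK k hk)).sub (integrable_const d)).pos_part
          (fun ω => le_max_left _ _)
      have hexp : ∑ k ∈ S, γ k * ((∫ ω, Wk k ω ∂P) - d)
          = (∑ k ∈ S, γ k * ∫ ω, Wk k ω ∂P) - g * d := by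
        simp_rw [mul_sub]
        rw [Finset.sum_sub_distrib, ← Finset.sum_mul, ← hg]
      rw [upperTrunc, hF, key]
      calc ∑ k ∈ S, γ k / g * ∫ ω, Wk k ω ∂P
          = g⁻¹ * (g * d + ∑ k ∈ S, γ k * ((∫ ω, Wk k ω ∂P) - d)) := by
            rw [hexp,
              show g * d + ((∑ k ∈ S, γ k * ∫ ω, Wk k ω ∂P) - g * d)
                = ∑ k ∈ S, γ k * ∫ ω, Wk k ω ∂P by ring, Finset.mul_sum]
            exact Finset.sum_congr rfl fun k _ => by rw [div_eq_mul_inv]; ring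
        _ ≤ g⁻¹ * (g * d + ∫ x, max (x - d) 0 ∂μ) :=
            mul_le_mul_of_nonneg_left (add_le_add_right hstep2 _) (inv_nonneg.mpr hγbar.le)
  · -- g = 1
    have hzero : ∀ k ∈ Finset.range (K + 1), k ∉ S → γ k = 0 := by
      have hsd := Finset.sum_sdiff (f := γ) hsubS
      have hrest : ∑ k ∈ Finset.range (K + 1) \ S, γ k = 0 := by
        rw [← hg] at hsd
        rw [hgeq] at hsd
        linarith [hsum, hsd]
      intro k hk hks
      exact (Finset.sum_eq_zero_iff_of_nonneg
        (fun i hi => hγ' i (Finset.mem_sdiff.mp hi).1)).mp hrest k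
        (Finset.mem_sdiff.mpr ⟨hk, hks⟩)
    have hEW : ∫ x, x ∂μ = ∑ k ∈ Finset.range (K + 1), γ k * ∫ ω, Wk k ω ∂P := by
      have := hmixint id measurable_id (fun k hk => by simpa using hWk k hk)
      simpa using this
    have hsums : ∑ k ∈ S, γ k / g * ∫ ω, Wk k ω ∂P = ∫ x, x ∂μ := by
      rw [hEW]
      rw [← Finset.sum_subset hsubS (fun k hk hks => by rw [hzero k hk hks, zero_mul])]
      exact Finset.sum_congr rfl fun k _ => by rw [hgeq, div_one]
    have e1 : ∫ u in Ioo (0:ℝ) 1, quantileFn (⇑(cdf μ)) u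
        = ∫ u in Ioo (0:ℝ) 1, qres (cdf μ) u :=
      setIntegral_congr_fun measurableSet_Ioo fun u hu => (qres_eq μ hu).symm
    have e2 := qres_integral μ id measurable_id
    have hTrL : lowerTrunc (cdfOf P W) g = ∫ x, x ∂μ := by
      rw [lowerTrunc, hgeq, hF, inv_one, one_mul, integral_Ioc_eq_integral_Ioo, e1]
      simpa using e2.symm
    have hTrU : upperTrunc (cdfOf P W) g = ∫ x, x ∂μ := by
      rw [upperTrunc, hgeq, inv_one, one_mul, hF, show (1:ℝ) - 1 = 0 by ring,
        integral_Ico_eq_integral_Ioo, e1]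
      simpa using e2.symm
    constructor
    · rw [hTrL, hsums]
    · rw [hTrU, hsums]
end

section
/- (Two-firm case: nonemptiness of the identified set.) Let q(d,z) ≥ 0 for d ∈ {0, L, H} and z ∈ {0,1} with Σ_{d ∈ {0,L,H}} q(d,z) = 1 for each z (interpreted as q(d,z) = P(D=d | Z=z)). Let Θ_I(LM) be the set of vectors p = (p_{(d,d')})_{(d,d') ∈ {0,L,H}²} with p_{(d,d')} ≥ 0, Σ p = 1, p_{(L,0)} = p_{(H,0)} = 0 (Assumption LM), and satisfying q(d,1) = Σ_{d' ∈ {0,L,H}} p_{(d',d)} and q(d,0) = Σ_{d' ∈ {0,L,H}} p_{(d,d')} for every d ∈ {0,L,H}. Then Θ_I(LM) ≠ ∅ if and only if q(0,1) ≤ q(0,0). -/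
/-- The three layers in the two-firm setting: non-employment (`nul`),
low-type firms (`L`) and high-type firms (`H`). -/
inductive Layer : Type
  | nul : Layer
  | L : Layer
  | H : Layer
  deriving DecidableEq

instance : Fintype Layer :=
  ⟨{Layer.nul, Layer.L, Layer.H}, by intro x; cases x <;> simp⟩

lemma sum_layer (f : Layer → ℝ) : ∑ d : Layer, f d = f .nul + f .L + f .H := by
  show ∑ d ∈ ({Layer.nul, Layer.L, Layer.H} : Finset Layer), f d = _
  simp [Finset.sum_insert, Finset.mem_insert]
  ring

/-- two-firm case, nonemptiness of the identified set: the
identified set under Assumption LM is nonempty iff `q(0,1) ≤ q(0,0)`. -/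
theorem two_firm_identified_set_nonempty_iff
    (q : Layer → Fin 2 → ℝ)
    (hq : ∀ d z, 0 ≤ q d z)
    (hsum : ∀ z, ∑ d : Layer, q d z = 1) :
    (∃ p : Layer × Layer → ℝ,
      (∀ t, 0 ≤ p t) ∧
      (∑ t : Layer × Layer, p t = 1) ∧
      p (Layer.L, Layer.nul) = 0 ∧ p (Layer.H, Layer.nul) = 0 ∧
      (∀ d, q d 1 = ∑ d' : Layer, p (d', d)) ∧
      (∀ d, q d 0 = ∑ d' : Layer, p (d, d')))
    ↔ q Layer.nul 1 ≤ q Layer.nul 0 := by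
  have hs0 := hsum 0; have hs1 := hsum 1
  rw [sum_layer] at hs0 hs1
  constructor
  · rintro ⟨p, hpos, -, hL0, hH0, h1, h0⟩
    have e1 := h1 Layer.nul
    have e0 := h0 Layer.nul
    rw [sum_layer] at e1 e0
    have := hpos (Layer.nul, Layer.L)
    have := hpos (Layer.nul, Layer.H)
    rw [hL0, hH0] at e1
    linarith
  · intro h
    by_cases hSz : q Layer.L 1 + q Layer.H 1 = 0
    · have hL1 : q Layer.L 1 = 0 := by nlinarith [hq Layer.L 1, hq Layer.H 1]
      have hH1 : q Layer.H 1 = 0 := by nlinarith [hq Layer.L 1, hq Layer.H 1]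
      have h01 : q Layer.nul 1 = 1 := by linarith
      have h00 : q Layer.nul 0 = 1 := by nlinarith [hq Layer.L 0, hq Layer.H 0]
      have hL0' : q Layer.L 0 = 0 := by nlinarith [hq Layer.L 0, hq Layer.H 0]
      have hH0' : q Layer.H 0 = 0 := by nlinarith [hq Layer.L 0, hq Layer.H 0]
      refine ⟨fun t => if t = (Layer.nul, Layer.nul) then 1 else 0, ?_, ?_, ?_, ?_, ?_, ?_⟩
      · intro t; dsimp only; split <;> norm_num
      · rw [Fintype.sum_prod_type]; simp only [sum_layer]; simp [Prod.ext_iff]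
      · simp
      · simp
      · intro d; cases d <;> rw [sum_layer] <;> simp [Prod.ext_iff] <;> linarith
      · intro d; cases d <;> rw [sum_layer] <;> simp [Prod.ext_iff] <;> linarith
    · have hSpos : 0 < q Layer.L 1 + q Layer.H 1 := by
        rcases lt_or_eq_of_le (add_nonneg (hq Layer.L 1) (hq Layer.H 1)) with h' | h'
        · exact h'
        · exact absurd h'.symm hSz
      have hδ : 0 ≤ q Layer.nul 0 - q Layer.nul 1 := by linarith
      have hkey : q Layer.nul 0 - q Layer.nul 1 + q Layer.L 0 + q Layer.H 0
          = q Layer.L 1 + q Layer.H 1 := by linarith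
      refine ⟨fun t => match t with
        | (.nul, .nul) => q Layer.nul 1
        | (.nul, .L) => (q Layer.nul 0 - q Layer.nul 1) * q Layer.L 1 / (q Layer.L 1 + q Layer.H 1)
        | (.nul, .H) => (q Layer.nul 0 - q Layer.nul 1) * q Layer.H 1 / (q Layer.L 1 + q Layer.H 1)
        | (.L, .nul) => 0
        | (.L, .L) => q Layer.L 0 * q Layer.L 1 / (q Layer.L 1 + q Layer.H 1)
        | (.L, .H) => q Layer.L 0 * q Layer.H 1 / (q Layer.L 1 + q Layer.H 1)
        | (.H, .nul) => 0
        | (.H, .L) => q Layer.H 0 * q Layer.L 1 / (q Layer.L 1 + q Layer.H 1)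
        | (.H, .H) => q Layer.H 0 * q Layer.H 1 / (q Layer.L 1 + q Layer.H 1), ?_, ?_, ?_, ?_, ?_, ?_⟩
      · rintro ⟨a, b⟩
        cases a <;> cases b <;>
          first
          | exact hq _ _
          | exact le_refl 0
          | exact div_nonneg (mul_nonneg hδ (hq _ _)) hSpos.le
          | exact div_nonneg (mul_nonneg (hq _ _) (hq _ _)) hSpos.le
      · rw [Fintype.sum_prod_type]; simp only [sum_layer]
        field_simp
        linear_combination (q Layer.L 1 + q Layer.H 1) * (hs1 + hkey)
      · rfl
      · rfl
      · intro d
        cases d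
        · rw [sum_layer]; ring
        · rw [sum_layer]; field_simp
          linear_combination (-q Layer.L 1) * hkey
        · rw [sum_layer]; field_simp
          linear_combination (-q Layer.H 1) * hkey
      · intro d
        cases d
        · rw [sum_layer]; field_simp
          ring
        · rw [sum_layer]; field_simp
          ring
        · rw [sum_layer]; field_simp
          ring
end

section
/- (Two-firm case: closed-form minimal stayer probabilities.) Let q(d,z) ≥ 0 for d ∈ {0, L, H} and z ∈ {0,1} with Σ_{d ∈ {0,L,H}} q(d,z) = 1 for each z, and suppose q(0,1) ≤ q(0,0). Let Θ_I(LM) be the set of vectors p = (p_{(d,d')})_{(d,d') ∈ {0,L,H}²} with p_{(d,d')} ≥ 0, Σ p = 1, p_{(L,0)} = p_{(H,0)} = 0, and satisfying q(d,1) = Σ_{d' ∈ {0,L,H}} p_{(d',d)} and q(d,0) = Σ_{d' ∈ {0,L,H}} p_{(d,d')} for every d ∈ {0,L,H}. Then the minimum of p_{(H,H)} over Θ_I(LM) equals max{0, q(H,0) − q(L,1)}, and the minimum of p_{(L,L)} over Θ_I(LM) equals max{0, q(L,0) − q(H,1)}; moreover, for each fixed value of (p_{(H,H)}, p_{(L,L)})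 consistent with Θ_I(LM), the remaining coordinates are determined by p_{(0,0)} = 1 − q(H,1) − q(L,1), p_{(0,L)} = q(L,1) − q(H,0) + p_{(H,H)} − p_{(L,L)}, p_{(0,H)} = q(H,1) − q(L,0) + p_{(L,L)} − p_{(H,H)}, p_{(L,H)} = q(L,0) − p_{(L,L)}, and p_{(H,L)} = q(H,0) − p_{(H,H)}. -/
/-- The identified set `Θ_I(LM)` in the two-firm setting: nonnegative
response-type probability vectors summing to one, satisfying monotonicity
(`p(L,0) = p(H,0) = 0`) and matching both propensity-score margins. -/
def ThetaLM (q : Layer → Fin 2 → ℝ) : Set (Layer × Layer → ℝ) :=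
  {p | (∀ t, 0 ≤ p t) ∧
       (∑ t : Layer × Layer, p t = 1) ∧
       p (Layer.L, Layer.nul) = 0 ∧ p (Layer.H, Layer.nul) = 0 ∧
       (∀ d, q d 1 = ∑ d' : Layer, p (d', d)) ∧
       (∀ d, q d 0 = ∑ d' : Layer, p (d, d'))}

lemma sum_layer2 (f : Layer × Layer → ℝ) : ∑ t : Layer × Layer, f t =
    f (.nul,.nul) + f (.nul,.L) + f (.nul,.H) + f (.L,.nul) + f (.L,.L) + f (.L,.H)
    + f (.H,.nul) + f (.H,.L) + f (.H,.H) := by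
  rw [Fintype.sum_prod_type, sum_layer (fun d => ∑ d', f (d, d'))]
  rw [sum_layer, sum_layer, sum_layer]; ring

/-- Explicit witness achieving the minimal stayer probabilities. -/
def wit (q : Layer → Fin 2 → ℝ) : Layer × Layer → ℝ
  | (.nul, .nul) => q .nul 1
  | (.nul, .L) => q .L 1 - q .H 0 + max 0 (q .H 0 - q .L 1) - max 0 (q .L 0 - q .H 1)
  | (.nul, .H) => q .H 1 - q .L 0 + max 0 (q .L 0 - q .H 1) - max 0 (q .H 0 - q .L 1)
  | (.L, .nul) => 0
  | (.L, .L) => max 0 (q .L 0 - q .H 1)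
  | (.L, .H) => q .L 0 - max 0 (q .L 0 - q .H 1)
  | (.H, .nul) => 0
  | (.H, .L) => q .H 0 - max 0 (q .H 0 - q .L 1)
  | (.H, .H) => max 0 (q .H 0 - q .L 1)

lemma wit_mem (q : Layer → Fin 2 → ℝ)
    (hq : ∀ d z, 0 ≤ q d z)
    (hsum : ∀ z, ∑ d : Layer, q d z = 1)
    (hmono : q Layer.nul 1 ≤ q Layer.nul 0) : wit q ∈ ThetaLM q := by
  have h0 := hsum 0; rw [sum_layer] at h0
  have h1 := hsum 1; rw [sum_layer] at h1
  have hkey : q .L 0 + q .H 0 ≤ q .L 1 + q .H 1 := by linarith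
  set x := max 0 (q Layer.H 0 - q Layer.L 1) with hxdef
  set y := max 0 (q Layer.L 0 - q Layer.H 1) with hydef
  have hx0 : 0 ≤ x := le_max_left _ _
  have hy0 : 0 ≤ y := le_max_left _ _
  have hxc : x ≤ q .H 0 := max_le (hq _ _) (by linarith [hq Layer.L 1])
  have hyb : y ≤ q .L 0 := max_le (hq _ _) (by linarith [hq Layer.H 1])
  have h0L : 0 ≤ q .L 1 - q .H 0 + x - y := by
    rcases le_total (q Layer.H 0) (q Layer.L 1) with h | h
    · have hx : x = 0 := max_eq_left (by linarith)
      have hy : y ≤ q .L 1 - q .H 0 := max_le (by linarith) (by linarith)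
      linarith
    · have hx : x = q .H 0 - q .L 1 := max_eq_right (by linarith)
      have hy : y = 0 := max_eq_left (by linarith)
      linarith
  have h0H : 0 ≤ q .H 1 - q .L 0 + y - x := by
    rcases le_total (q Layer.L 0) (q Layer.H 1) with h | h
    · have hy : y = 0 := max_eq_left (by linarith)
      have hx : x ≤ q .H 1 - q .L 0 := max_le (by linarith) (by linarith)
      linarith
    · have hy : y = q .L 0 - q .H 1 := max_eq_right (by linarith)
      have hx : x = 0 := max_eq_left (by linarith)
      linarith
  refine ⟨?_, ?_, rfl, rfl, ?_, ?_⟩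
  · rintro ⟨d, d'⟩
    cases d <;> cases d' <;> simp only [wit, ← hxdef, ← hydef] <;>
      first | exact le_rfl | exact hq _ _ | exact h0L | exact h0H
            | exact hx0 | exact hy0 | linarith
  · rw [sum_layer2]; simp only [wit, ← hxdef, ← hydef]; linarith
  · intro d
    cases d <;> rw [sum_layer] <;> simp only [wit, ← hxdef, ← hydef] <;> ring
  · intro d
    cases d <;> rw [sum_layer] <;> simp only [wit, ← hxdef, ← hydef] <;> [skip; ring; ring]
    linarith

/-- two-firm case, closed-form minimal stayer probabilities:
the minimum of `p(H,H)` over `Θ_I(LM)` is `max{0, q(H,0) − q(L,1)}`, the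
minimum of `p(L,L)` is `max{0, q(L,0) − q(H,1)}`, and for any `p ∈ Θ_I(LM)`
all remaining coordinates are determined by `(p(H,H), p(L,L))` via the stated
closed-form expressions. -/
theorem two_firm_minimal_stayer_probabilities
    (q : Layer → Fin 2 → ℝ)
    (hq : ∀ d z, 0 ≤ q d z)
    (hsum : ∀ z, ∑ d : Layer, q d z = 1)
    (hmono : q Layer.nul 1 ≤ q Layer.nul 0) :
    IsLeast ((fun p => p (Layer.H, Layer.H)) '' ThetaLM q)
        (max 0 (q Layer.H 0 - q Layer.L 1)) ∧
    IsLeast ((fun p => p (Layer.L, Layer.L)) '' ThetaLM q)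
        (max 0 (q Layer.L 0 - q Layer.H 1)) ∧
    (∀ p ∈ ThetaLM q,
      p (Layer.nul, Layer.nul) = 1 - q Layer.H 1 - q Layer.L 1 ∧
      p (Layer.nul, Layer.L)
        = q Layer.L 1 - q Layer.H 0 + p (Layer.H, Layer.H) - p (Layer.L, Layer.L) ∧
      p (Layer.nul, Layer.H)
        = q Layer.H 1 - q Layer.L 0 + p (Layer.L, Layer.L) - p (Layer.H, Layer.H) ∧
      p (Layer.L, Layer.H) = q Layer.L 0 - p (Layer.L, Layer.L) ∧
      p (Layer.H, Layer.L) = q Layer.H 0 - p (Layer.H, Layer.H)) := by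
  have h1 := hsum 1; rw [sum_layer] at h1
  refine ⟨⟨⟨wit q, wit_mem q hq hsum hmono, rfl⟩, ?_⟩,
          ⟨⟨wit q, wit_mem q hq hsum hmono, rfl⟩, ?_⟩, ?_⟩
  · rintro v ⟨p, ⟨hnn, -, -, hH0, hcol, hrow⟩, rfl⟩
    have hL1 := hcol Layer.L; rw [sum_layer] at hL1
    have hrH := hrow Layer.H; rw [sum_layer] at hrH
    exact max_le (hnn _) (by linarith [hnn (Layer.nul, Layer.L), hnn (Layer.L, Layer.L)])
  · rintro v ⟨p, ⟨hnn, -, hL0, -, hcol, hrow⟩, rfl⟩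
    have hH1 := hcol Layer.H; rw [sum_layer] at hH1
    have hrL := hrow Layer.L; rw [sum_layer] at hrL
    exact max_le (hnn _) (by linarith [hnn (Layer.nul, Layer.H), hnn (Layer.H, Layer.H)])
  · rintro p ⟨hnn, -, hL0, hH0, hcol, hrow⟩
    have hc0 := hcol Layer.nul; rw [sum_layer] at hc0
    have hcL := hcol Layer.L; rw [sum_layer] at hcL
    have hcH := hcol Layer.H; rw [sum_layer] at hcH
    have hrL := hrow Layer.L; rw [sum_layer] at hrL
    have hrH := hrow Layer.H; rw [sum_layer] at hrH
    refine ⟨by linarith, by linarith, by linarith, by linarith, by linarith⟩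
end
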